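/- arXiv:1107.3818 — 5 statements merged into one kernel-verified Lean document; each statement's English description precedes it below -/
import Mathlib

section
/- For t > -1, one can write h(t) = (1/2)·t²·ψ(t) where ψ(t) = 2((1+t)log(1+t) - t)/t² for t ≠ 0 and ψ(0) = 1; the function ψ is decreasing on (-1, ∞). -/
noncomputable def h (t : ℝ) : ℝ := (1 + t) * Real.log (1 + t) - t

noncomputable def psi (t : ℝ) : ℝ := if t = 0 then 1 else 2 * h t / t ^ 2

open Set

lemma psi_ne {t : ℝ} (ht : t ≠ 0) : psi t = 2 * h t / t ^ 2 := if_neg ht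

lemma psi_zero : psi 0 = 1 := if_pos rfl

lemma hasDerivAt_h {t : ℝ} (ht : -1 < t) :
    HasDerivAt h (Real.log (1 + t)) t := by
  have h0 : (0:ℝ) < 1 + t := by linarith
  have h1 : HasDerivAt (fun t : ℝ => 1 + t) 1 t := by
    simpa using (hasDerivAt_id t).const_add 1
  have hlog : HasDerivAt (fun t : ℝ => Real.log (1 + t)) (1/(1+t)) t := by
    have := (Real.hasDerivAt_log (ne_of_gt h0)).comp t h1
    simpa [Function.comp_def] using this
  have hmul := h1.mul hlog
  have := hmul.sub (hasDerivAt_id t)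
  refine this.congr_deriv ?_
  rw [mul_one_div_cancel (ne_of_gt h0)]; ring

lemma hasDerivAt_g {t : ℝ} (ht : -1 < t) (ht0 : t ≠ 0) :
    HasDerivAt (fun t => 2 * h t / t ^ 2)
      ((2 * Real.log (1 + t) * t ^ 2 - 2 * h t * (2 * t)) / (t ^ 2) ^ 2) t := by
  have hf : HasDerivAt (fun t => 2 * h t) (2 * Real.log (1 + t)) t :=
    (hasDerivAt_h ht).const_mul 2
  have hg : HasDerivAt (fun t : ℝ => t ^ 2) (2 * t) t := by
    simpa using hasDerivAt_pow 2 t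
  exact hf.div hg (pow_ne_zero 2 ht0)

lemma q_deriv {t : ℝ} (ht : -1 < t) :
    HasDerivAt (fun t => Real.log (1 + t) - 2 * t / (t + 2))
      (1/(1+t) - 4/(t+2)^2) t := by
  have h0 : (0:ℝ) < 1 + t := by linarith
  have h2 : (0:ℝ) < t + 2 := by linarith
  have h1 : HasDerivAt (fun t : ℝ => 1 + t) 1 t := by
    simpa using (hasDerivAt_id t).const_add 1
  have hlog : HasDerivAt (fun t : ℝ => Real.log (1 + t)) (1/(1+t)) t := by
    have := (Real.hasDerivAt_log (ne_of_gt h0)).comp t h1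
    simpa [Function.comp_def] using this
  have hn : HasDerivAt (fun t : ℝ => 2 * t) 2 t := by
    simpa using (hasDerivAt_id t).const_mul 2
  have hd : HasDerivAt (fun t : ℝ => t + 2) 1 t := by
    simpa using (hasDerivAt_id t).add_const 2
  have hq := hn.div hd (ne_of_gt h2)
  have := hlog.sub hq
  have h4 : 2 * (t + 2) - 2 * t * 1 = (4:ℝ) := by ring
  rw [h4] at this
  exact this

/-- q t = log(1+t) - 2t/(t+2) is monotone on (-1,∞). -/
lemma q_mono : MonotoneOn (fun t => Real.log (1 + t) - 2 * t / (t + 2)) (Ioi (-1 : ℝ)) := by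
  apply monotoneOn_of_deriv_nonneg (convex_Ioi _)
  · intro t ht
    exact (q_deriv ht).differentiableAt.continuousAt.continuousWithinAt
  · intro t ht
    rw [interior_Ioi] at ht
    exact (q_deriv ht).differentiableAt.differentiableWithinAt
  · intro t ht
    rw [interior_Ioi] at ht
    rw [(q_deriv ht).deriv]
    simp only [mem_Ioi] at ht
    have h0 : (0:ℝ) < 1 + t := by linarith
    have h2 : (0:ℝ) < t + 2 := by linarith
    rw [sub_nonneg, div_le_div_iff₀ (by positivity) h0]
    nlinarith [sq_nonneg t]
  all_goals try exact ht

lemma q_nonneg {t : ℝ} (ht : 0 ≤ t) : 2 * t ≤ (t + 2) * Real.log (1 + t) := by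
  have := q_mono (by norm_num : (0:ℝ) ∈ Ioi (-1:ℝ)) (by simp; linarith : t ∈ Ioi (-1:ℝ)) ht
  simp only [Real.log_one] at this
  norm_num at this
  have h2 : (0:ℝ) < t + 2 := by linarith
  rw [div_le_iff₀ h2] at this
  linarith [mul_comm (Real.log (1 + t)) (t + 2)]

lemma q_nonpos {t : ℝ} (ht : -1 < t) (ht0 : t ≤ 0) :
    (t + 2) * Real.log (1 + t) ≤ 2 * t := by
  have := q_mono (by simpa using ht : t ∈ Ioi (-1:ℝ)) (by norm_num : (0:ℝ) ∈ Ioi (-1:ℝ)) ht0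
  simp only [Real.log_one] at this
  norm_num at this
  have h2 : (0:ℝ) < t + 2 := by linarith
  rw [le_div_iff₀ h2] at this
  linarith [mul_comm (Real.log (1 + t)) (t + 2)]

lemma F_deriv {t : ℝ} (ht : -1 < t) :
    HasDerivAt (fun t => t ^ 2 / 2 + t - (1 + t) * Real.log (1 + t))
      (t - Real.log (1 + t)) t := by
  have h0 : (0:ℝ) < 1 + t := by linarith
  have h1 : HasDerivAt (fun t : ℝ => 1 + t) 1 t := by
    simpa using (hasDerivAt_id t).const_add 1
  have hlog : HasDerivAt (fun t : ℝ => Real.log (1 + t)) (1/(1+t)) t := by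
    have := (Real.hasDerivAt_log (ne_of_gt h0)).comp t h1
    simpa [Function.comp_def] using this
  have hsq : HasDerivAt (fun t : ℝ => t ^ 2 / 2 + t) (t + 1) t := by
    have : HasDerivAt (fun t : ℝ => t ^ 2) (2 * t) t := by
      simpa using hasDerivAt_pow 2 t
    exact ((this.div_const 2).add (hasDerivAt_id t)).congr_deriv (by ring)
  have := hsq.sub (h1.mul hlog)
  refine this.congr_deriv ?_
  rw [mul_one_div_cancel (ne_of_gt h0)]; ring

/-- F t = t²/2 + t - (1+t)log(1+t) is monotone on (-1,∞). -/
lemma F_mono : MonotoneOn (fun t => t ^ 2 / 2 + t - (1 + t) * Real.log (1 + t)) (Ioi (-1:ℝ)) := by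
  apply monotoneOn_of_deriv_nonneg (convex_Ioi _)
  · intro t ht
    exact (F_deriv ht).differentiableAt.continuousAt.continuousWithinAt
  · intro t ht
    rw [interior_Ioi] at ht
    exact (F_deriv ht).differentiableAt.differentiableWithinAt
  · intro t ht
    rw [interior_Ioi] at ht
    rw [(F_deriv ht).deriv]
    simp only [mem_Ioi] at ht
    have h0 : (0:ℝ) < 1 + t := by linarith
    have := Real.log_le_sub_one_of_pos h0
    linarith

lemma two_h_le {t : ℝ} (ht : 0 ≤ t) : 2 * h t ≤ t ^ 2 := by
  have := F_mono (by norm_num : (0:ℝ) ∈ Ioi (-1:ℝ)) (by simp; linarith : t ∈ Ioi (-1:ℝ)) ht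
  simp only [Real.log_one] at this
  norm_num at this
  unfold h
  nlinarith [this]

lemma le_two_h {t : ℝ} (ht : -1 < t) (ht0 : t ≤ 0) : t ^ 2 ≤ 2 * h t := by
  have := F_mono (by simpa using ht : t ∈ Ioi (-1:ℝ)) (by norm_num : (0:ℝ) ∈ Ioi (-1:ℝ)) ht0
  simp only [Real.log_one] at this
  norm_num at this
  unfold h
  nlinarith [this]

lemma psi_le_one {t : ℝ} (ht : 0 < t) : psi t ≤ 1 := by
  rw [psi_ne (ne_of_gt ht), div_le_one (by positivity)]
  exact two_h_le ht.le

lemma one_le_psi {t : ℝ} (ht : -1 < t) (ht0 : t < 0) : 1 ≤ psi t := by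
  have hsq : (0:ℝ) < t ^ 2 := by nlinarith
  rw [psi_ne (ne_of_lt ht0), le_div_iff₀ hsq]
  simpa using le_two_h ht ht0.le

lemma deriv_g_nonpos {t : ℝ} (ht : -1 < t) (ht0 : t ≠ 0) :
    deriv (fun t => 2 * h t / t ^ 2) t ≤ 0 := by
  rw [(hasDerivAt_g ht ht0).deriv]
  apply div_nonpos_of_nonpos_of_nonneg _ (by positivity)
  have hL : h t = (1 + t) * Real.log (1 + t) - t := rfl
  rcases lt_or_gt_of_ne ht0 with hneg | hpos
  · have hq := q_nonpos ht hneg.le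
    nlinarith [hq, hneg]
  · have hq := q_nonneg hpos.le
    nlinarith [hq, hpos]

lemma g_anti_pos : AntitoneOn (fun t => 2 * h t / t ^ 2) (Ioi (0:ℝ)) := by
  apply antitoneOn_of_deriv_nonpos (convex_Ioi _)
  · intro t ht
    simp only [mem_Ioi] at ht
    exact (hasDerivAt_g (by linarith) (ne_of_gt ht)).differentiableAt.continuousAt.continuousWithinAt
  · intro t ht
    rw [interior_Ioi] at ht
    simp only [mem_Ioi] at ht
    exact (hasDerivAt_g (by linarith) (ne_of_gt ht)).differentiableAt.differentiableWithinAt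
  · intro t ht
    rw [interior_Ioi] at ht
    simp only [mem_Ioi] at ht
    exact deriv_g_nonpos (by linarith) (ne_of_gt ht)

lemma g_anti_neg : AntitoneOn (fun t => 2 * h t / t ^ 2) (Ioo (-1:ℝ) 0) := by
  apply antitoneOn_of_deriv_nonpos (convex_Ioo _ _)
  · intro t ht
    simp only [mem_Ioo] at ht
    exact (hasDerivAt_g ht.1 (ne_of_lt ht.2)).differentiableAt.continuousAt.continuousWithinAt
  · intro t ht
    rw [interior_Ioo] at ht
    simp only [mem_Ioo] at ht
    exact (hasDerivAt_g ht.1 (ne_of_lt ht.2)).differentiableAt.differentiableWithinAt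
  · intro t ht
    rw [interior_Ioo] at ht
    simp only [mem_Ioo] at ht
    exact deriv_g_nonpos ht.1 (ne_of_lt ht.2)

theorem psi_antitone : AntitoneOn psi (Set.Ioi (-1 : ℝ)) := by
  intro a ha b hb hab
  simp only [mem_Ioi] at ha hb
  rcases lt_trichotomy b 0 with hb0 | hb0 | hb0
  · have ha0 : a < 0 := lt_of_le_of_lt hab hb0
    have := g_anti_neg (⟨ha, ha0⟩ : a ∈ Ioo (-1:ℝ) 0) ⟨hb, hb0⟩ hab
    rwa [psi_ne (ne_of_lt ha0), psi_ne (ne_of_lt hb0)]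
  · subst hb0
    rcases eq_or_lt_of_le hab with rfl | ha0
    · exact le_refl _
    · rw [psi_zero]
      exact one_le_psi ha ha0
  · rcases lt_trichotomy a 0 with ha0 | ha0 | ha0
    · exact le_trans (psi_le_one hb0) (one_le_psi ha ha0)
    · subst ha0
      rw [psi_zero]
      exact psi_le_one hb0
    · have := g_anti_pos (mem_Ioi.mpr ha0) (mem_Ioi.mpr hb0) hab
      rwa [psi_ne (ne_of_gt ha0), psi_ne (ne_of_gt hb0)]
end

section
/- For all t ≥ 0, ψ(t) ≥ 2·log(1+2t)/(1+2t), where ψ(t) = 2((1+t)log(1+t) - t)/t² for t > 0 and ψ(0) = 1. Equivalently, (1+t)log(1+t) - t ≥ t²·log(1+2t)/(1+2t) for all t ≥ 0. -/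
/-- Polynomial certificate. -/
noncomputable def Gp (t : ℝ) : ℝ :=
  (256 : ℝ) * t ^ 0 + (7040/3 : ℝ) * t ^ 1 + (29312/3 : ℝ) * t ^ 2 + (121152/5 : ℝ) * t ^ 3 + (196704/5 : ℝ) * t ^ 4 + (1501904/35 : ℝ) * t ^ 5 + (634688/21 : ℝ) * t ^ 6 + (683504/63 : ℝ) * t ^ 7 - ((641861/315) : ℝ) * t ^ 8 - ((214271/45) : ℝ) * t ^ 9 - ((12211/5) : ℝ) * t ^ 10 - ((27983/90) : ℝ) * t ^ 11 + (98402/315 : ℝ) * t ^ 12 + (89791/420 : ℝ) * t ^ 13 + (83611/1260 : ℝ) * t ^ 14 + (13987/1260 : ℝ) * t ^ 15 + (1027/1260 : ℝ) * t ^ 16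

lemma Gp_nonneg (t : ℝ) (ht : 0 ≤ t) : 0 ≤ Gp t := by
  rcases le_total t 2 with h2 | h2
  · have hu : (0:ℝ) ≤ 2 - t := by linarith
    have e : Gp t =
      (1/256 : ℝ) * t ^ 0 * (2 - t) ^ 16 + (103/768 : ℝ) * t ^ 1 * (2 - t) ^ 15 + (1643/768 : ℝ) * t ^ 2 * (2 - t) ^ 14 + (80693/3840 : ℝ) * t ^ 3 * (2 - t) ^ 13 + (545351/3840 : ℝ) * t ^ 4 * (2 - t) ^ 12 + (3756791/5376 : ℝ) * t ^ 5 * (2 - t) ^ 11 + (23144853/8960 : ℝ) * t ^ 6 * (2 - t) ^ 10 + (117631747/16128 : ℝ) * t ^ 7 * (2 - t) ^ 9 + (127662301/8064 : ℝ) * t ^ 8 * (2 - t) ^ 8 + (60717173/2304 : ℝ) * t ^ 9 * (2 - t) ^ 7 + (127748347/3840 : ℝ) * t ^ 10 * (2 - t) ^ 6 + (39887311/1280 : ℝ) * t ^ 11 * (2 - t) ^ 5 + (561600539/26880 : ℝ) * t ^ 12 * (2 - t) ^ 4 + (84999241/8960 : ℝ) * t ^ 13 * (2 - t) ^ 3 +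 (3469543/1280 : ℝ) * t ^ 14 * (2 - t) ^ 2 + (1823683/3840 : ℝ) * t ^ 15 * (2 - t) ^ 1 + (109419/1792 : ℝ) * t ^ 16 * (2 - t) ^ 0 := by
      unfold Gp; ring
    rw [e]
    repeat' apply add_nonneg
    all_goals
      exact mul_nonneg (mul_nonneg (by norm_num) (pow_nonneg ht _)) (pow_nonneg hu _)
  · have hu : (0:ℝ) ≤ t - 2 := by linarith
    have e : Gp t =
      (28011264/7 : ℝ) * (t - 2) ^ 0 + (1727331712/105 : ℝ) * (t - 2) ^ 1 + (1670994944/35 : ℝ) * (t - 2) ^ 2 + (3666778816/35 : ℝ) * (t - 2) ^ 3 + (5630054176/35 : ℝ) * (t - 2) ^ 4 + (173468880 : ℝ) * (t - 2) ^ 5 + (14230358896/105 : ℝ) * (t - 2) ^ 6 + (24858078016/315 : ℝ) * (t - 2) ^ 7 + (1571553967/45 : ℝ) * (t - 2) ^ 8 + (1246772843/105 : ℝ) * (t - 2) ^ 9 + (979525088/315 : ℝ) * (t - 2) ^ 10 + (78560047/126 : ℝ) * (t - 2) ^ 11 + (565003/6 : ℝ) * (t - 2) ^ 12 + (13085981/1260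 : ℝ) * (t - 2) ^ 13 + (996181/1260 : ℝ) * (t - 2) ^ 14 + (2231/60 : ℝ) * (t - 2) ^ 15 + (1027/1260 : ℝ) * (t - 2) ^ 16 := by
      unfold Gp; ring
    rw [e]
    repeat' apply add_nonneg
    all_goals exact mul_nonneg (by norm_num) (pow_nonneg hu _)

/-- Alternating series upper bound for `log (1+r)`. -/
lemma log_add_le (r : ℝ) (hr : 0 ≤ r) :
    Real.log (1 + r) ≤ r - r^2/2 + r^3/3 - r^4/4 + r^5/5 - r^6/6 + r^7/7 := by
  set F : ℝ → ℝ := fun s =>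
    s - s^2/2 + s^3/3 - s^4/4 + s^5/5 - s^6/6 + s^7/7 - Real.log (1 + s) with hF
  have hd : ∀ s : ℝ, 0 < 1 + s → HasDerivAt F (s^7/(1+s)) s := by
    intro s hs
    have hlog : HasDerivAt (fun y : ℝ => Real.log (1 + y)) (1/(1+s)) s := by
      have h1 : HasDerivAt (fun y : ℝ => 1 + y) 1 s := by
        simpa using (hasDerivAt_id s).const_add (1:ℝ)
      simpa using h1.log hs.ne'
    have hpoly : HasDerivAt
        (fun y : ℝ => y - y^2/2 + y^3/3 - y^4/4 + y^5/5 - y^6/6 + y^7/7)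
        (1 - s + s^2 - s^3 + s^4 - s^5 + s^6) s := by
      have := ((((( (hasDerivAt_id s).sub ((hasDerivAt_pow 2 s).div_const 2)).add
        ((hasDerivAt_pow 3 s).div_const 3)).sub ((hasDerivAt_pow 4 s).div_const 4)).add
        ((hasDerivAt_pow 5 s).div_const 5)).sub ((hasDerivAt_pow 6 s).div_const 6)).add
        ((hasDerivAt_pow 7 s).div_const 7)
      refine this.congr_deriv ?_
      push_cast; ring
    have := hpoly.sub hlog
    refine this.congr_deriv ?_
    field_simp
    ring
  have hmono : MonotoneOn F (Set.Ici (0:ℝ)) := by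
    apply monotoneOn_of_deriv_nonneg (convex_Ici 0)
    · apply ContinuousOn.sub (by fun_prop)
      apply ContinuousOn.log (by fun_prop)
      intro s hs
      have : (0:ℝ) ≤ s := hs
      positivity
    · intro s hs
      rw [interior_Ici] at hs
      exact (hd s (by have : (0:ℝ) < s := hs; linarith)).differentiableAt.differentiableWithinAt
    · intro s hs
      rw [interior_Ici] at hs
      have hs' : (0:ℝ) < s := hs
      rw [(hd s (by linarith)).deriv]
      positivity
  have h0 : F 0 ≤ F r := hmono (by simp [Set.mem_Ici]) hr hr
  simp only [hF] at h0
  norm_num [Real.log_one] at h0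
  linarith

/-- Odd series lower bound for `log ((1+x)/(1-x))`. -/
lemma atanh_bound (x : ℝ) (hx : 0 ≤ x) (hx1 : x < 1) :
    2*x + 2*x^3/3 + 2*x^5/5 + 2*x^7/7 + 2*x^9/9 ≤ Real.log (1 + x) - Real.log (1 - x) := by
  set F : ℝ → ℝ := fun s =>
    Real.log (1 + s) - Real.log (1 - s) - (2*s + 2*s^3/3 + 2*s^5/5 + 2*s^7/7 + 2*s^9/9) with hF
  have hd : ∀ s : ℝ, 0 ≤ s → s < 1 → HasDerivAt F (2*s^10/((1+s)*(1-s))) s := by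
    intro s hs0 hs1
    have h1 : (0:ℝ) < 1 + s := by linarith
    have h2 : (0:ℝ) < 1 - s := by linarith
    have hlog1 : HasDerivAt (fun y : ℝ => Real.log (1 + y)) (1/(1+s)) s := by
      have hl : HasDerivAt (fun y : ℝ => 1 + y) 1 s := by
        simpa using (hasDerivAt_id s).const_add (1:ℝ)
      simpa using hl.log h1.ne'
    have hlog2 : HasDerivAt (fun y : ℝ => Real.log (1 - y)) (-(1/(1-s))) s := by
      have hl : HasDerivAt (fun y : ℝ => 1 - y) (-1) s := by
        simpa using (hasDerivAt_id s).const_sub (1:ℝ)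
      have := hl.log h2.ne'
      convert this using 1
      field_simp
    have hpoly : HasDerivAt
        (fun y : ℝ => 2*y + 2*y^3/3 + 2*y^5/5 + 2*y^7/7 + 2*y^9/9)
        (2 + 2*s^2 + 2*s^4 + 2*s^6 + 2*s^8) s := by
      have := (((((hasDerivAt_id s).const_mul (2:ℝ)).add
        (((hasDerivAt_pow 3 s).const_mul (2:ℝ)).div_const 3)).add
        (((hasDerivAt_pow 5 s).const_mul (2:ℝ)).div_const 5)).add
        (((hasDerivAt_pow 7 s).const_mul (2:ℝ)).div_const 7)).add
        (((hasDerivAt_pow 9 s).const_mul (2:ℝ)).div_const 9)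
      refine this.congr_deriv ?_
      push_cast; ring
    have := (hlog1.sub hlog2).sub hpoly
    refine this.congr_deriv ?_
    field_simp
    ring
  have hmono : MonotoneOn F (Set.Ico (0:ℝ) 1) := by
    apply monotoneOn_of_deriv_nonneg (convex_Ico 0 1)
    · apply ContinuousOn.sub
      apply ContinuousOn.sub
      · apply ContinuousOn.log (by fun_prop)
        intro s hs
        have : (0:ℝ) ≤ s := hs.1
        positivity
      · apply ContinuousOn.log (by fun_prop)
        intro s hs
        have : s < 1 := hs.2
        intro hcon
        have : s = 1 := by linarith [sub_eq_zero.mp hcon]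
        linarith
      · fun_prop
    · intro s hs
      rw [interior_Ico] at hs
      exact (hd s hs.1.le hs.2).differentiableAt.differentiableWithinAt
    · intro s hs
      rw [interior_Ico] at hs
      have h1 : (0:ℝ) < 1 + s := by linarith [hs.1]
      have h2 : (0:ℝ) < 1 - s := by linarith [hs.2]
      rw [(hd s hs.1.le hs.2).deriv]
      positivity
  have h0 : F 0 ≤ F x := hmono (by constructor <;> norm_num) ⟨hx, hx1⟩ hx
  simp only [hF] at h0
  norm_num [Real.log_one] at h0
  linarith

lemma key (t : ℝ) (ht : 0 ≤ t) :
    t*(1+2*t) + t^2*((t/(1+t)) - (t/(1+t))^2/2 + (t/(1+t))^3/3 - (t/(1+t))^4/4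
        + (t/(1+t))^5/5 - (t/(1+t))^6/6 + (t/(1+t))^7/7)
      ≤ (1+3*t+t^2)*(2*(t/(t+2)) + 2*(t/(t+2))^3/3 + 2*(t/(t+2))^5/5
        + 2*(t/(t+2))^7/7 + 2*(t/(t+2))^9/9) := by
  rw [← sub_nonneg]
  have h1 : (0:ℝ) < 1 + t := by linarith
  have h2 : (0:ℝ) < t + 2 := by linarith
  have e : (1+3*t+t^2)*(2*(t/(t+2)) + 2*(t/(t+2))^3/3 + 2*(t/(t+2))^5/5
        + 2*(t/(t+2))^7/7 + 2*(t/(t+2))^9/9)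
      - (t*(1+2*t) + t^2*((t/(1+t)) - (t/(1+t))^2/2 + (t/(1+t))^3/3 - (t/(1+t))^4/4
        + (t/(1+t))^5/5 - (t/(1+t))^6/6 + (t/(1+t))^7/7))
      = t^2 * Gp t / ((t+2)^9 * (1+t)^7) := by
    rw [eq_div_iff (by positivity)]
    unfold Gp
    field_simp
    ring
  rw [e]
  exact div_nonneg (mul_nonneg (sq_nonneg t) (Gp_nonneg t ht)) (by positivity)

theorem h_ge_sq_log (t : ℝ) (ht : 0 ≤ t) :
    t ^ 2 * Real.log (1 + 2 * t) / (1 + 2 * t) ≤ h t := by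
  have h2t : (0:ℝ) < 1 + 2*t := by linarith
  have ht1 : (0:ℝ) < 1 + t := by linarith
  have ht2 : (0:ℝ) < t + 2 := by linarith
  rw [div_le_iff₀ h2t]
  unfold h
  have hsplit : Real.log (1 + 2*t) = Real.log (1 + t) + Real.log (1 + t/(1+t)) := by
    rw [← Real.log_mul (by positivity) (by positivity)]
    congr 1
    field_simp
    ring
  have hx : Real.log (1 + t/(t+2)) - Real.log (1 - t/(t+2)) = Real.log (1 + t) := by
    rw [← Real.log_div (by positivity) (by
      have : (1:ℝ) - t/(t+2) = 2/(t+2) := by field_simp; ring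
      rw [this]; positivity)]
    congr 1
    rw [div_eq_iff (by
      have : (1:ℝ) - t/(t+2) = 2/(t+2) := by field_simp; ring
      rw [this]; positivity)]
    field_simp
    ring
  have hQ := log_add_le (t/(1+t)) (by positivity)
  have hP := atanh_bound (t/(t+2)) (by positivity)
    (by rw [div_lt_one (by linarith)]; linarith)
  rw [hx] at hP
  have hkey := key t ht
  have hco : (0:ℝ) ≤ 1 + 3*t + t^2 := by positivity
  have hPL := mul_le_mul_of_nonneg_left hP hco
  have hQM := mul_le_mul_of_nonneg_left hQ (sq_nonneg t)
  rw [hsplit]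
  nlinarith [hPL, hQM, hkey]
end

section
/- Let k ≥ 3 and ρ_k = log(k-1)/(k-1). If u = (u_1,...,u_k) ∈ ℝ^k satisfies Σ_j u_j = 0 and -1 ≤ u_j ≤ k-1 for all j, then Σ_j h(u_j) ≥ ρ_k Σ_j u_j², where h(t) = (1+t)log(1+t) - t. -/
open Real Set

lemma log_ge_one_sub_inv {x : ℝ} (hx : 0 < x) : 1 - 1/x ≤ Real.log x := by
  have h := Real.log_le_sub_one_of_pos (show (0:ℝ) < 1/x by positivity)
  rw [one_div, Real.log_inv] at h
  rw [one_div]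
  linarith

/-- (K+1) log K ≥ 2(K-1) for K ≥ 1. -/
lemma C1 {K : ℝ} (hK : 1 ≤ K) : 2*(K-1) ≤ (K+1) * Real.log K := by
  set F : ℝ → ℝ := fun x => (x+1) * Real.log x - 2*(x-1) with hF
  have key : ∀ x ∈ Set.Ici (1:ℝ), ∀ y ∈ Set.Ici (1:ℝ), x ≤ y → F x ≤ F y := by
    have hmono : MonotoneOn F (Set.Ici (1:ℝ)) := by
      have hd : ∀ x : ℝ, 0 < x → HasDerivAt F (Real.log x + (1/x - 1)) x := by
        intro x hx
        have h1 : HasDerivAt (fun y : ℝ => y + 1) 1 x := by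
          simpa using (hasDerivAt_id x).add_const (1:ℝ)
        have h2 : HasDerivAt Real.log (1/x) x := by
          simpa [one_div] using Real.hasDerivAt_log (ne_of_gt hx)
        have h3 := h1.mul h2
        have h4 : HasDerivAt (fun y : ℝ => 2*(y-1)) 2 x := by
          simpa using ((hasDerivAt_id x).sub_const (1:ℝ)).const_mul (2:ℝ)
        have h5 := h3.sub h4
        refine h5.congr_deriv ?_
        field_simp
        ring
      apply monotoneOn_of_deriv_nonneg (convex_Ici 1)
      · intro x hx
        exact ((hd x (by exact lt_of_lt_of_le zero_lt_one (by simpa using hx))).continuousAt).continuousWithinAt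
      · intro x hx
        rw [interior_Ici] at hx
        exact ((hd x (by linarith [mem_Ioi.mp hx])).differentiableAt).differentiableWithinAt
      · intro x hx
        rw [interior_Ici] at hx
        have hx1 : (1:ℝ) < x := mem_Ioi.mp hx
        rw [(hd x (by linarith)).deriv]
        have := log_ge_one_sub_inv (show (0:ℝ) < x by linarith)
        linarith
    intro x hx y hy hxy; exact hmono hx hy hxy
  have h0 : F 1 = 0 := by simp [hF]
  have := key 1 (by norm_num) K (by simpa using hK) hK
  rw [h0] at this
  simp only [hF] at this
  linarith

/-- 2 K log K ≤ K² - 1 for K ≥ 2. -/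
lemma C2 {K : ℝ} (hK : 2 ≤ K) : 2*K*Real.log K ≤ K^2 - 1 := by
  set F : ℝ → ℝ := fun x => x^2 - 1 - 2*x*Real.log x with hF
  have hmono : MonotoneOn F (Set.Ici (2:ℝ)) := by
    have hd : ∀ x : ℝ, 0 < x → HasDerivAt F (2*x - 2*Real.log x - 2) x := by
      intro x hx
      have h1 : HasDerivAt (fun y : ℝ => y^2) (2*x) x := by
        simpa using hasDerivAt_pow 2 x
      have h2 : HasDerivAt (fun y : ℝ => 2*y) 2 x := by
        simpa using (hasDerivAt_id x).const_mul (2:ℝ)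
      have h3 : HasDerivAt Real.log (1/x) x := by
        simpa [one_div] using Real.hasDerivAt_log (ne_of_gt hx)
      have h4 := h2.mul h3
      have h5 := (h1.sub_const (1:ℝ)).sub h4
      refine h5.congr_deriv ?_
      field_simp
      ring
    apply monotoneOn_of_deriv_nonneg (convex_Ici 2)
    · intro x hx
      exact ((hd x (by simp at hx; linarith)).continuousAt).continuousWithinAt
    · intro x hx
      rw [interior_Ici] at hx
      exact ((hd x (by simp at hx; linarith)).differentiableAt).differentiableWithinAt
    · intro x hx
      rw [interior_Ici] at hx
      have hx1 : (2:ℝ) < x := mem_Ioi.mp hx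
      rw [(hd x (by linarith)).deriv]
      have := Real.log_le_sub_one_of_pos (show (0:ℝ) < x by linarith)
      linarith
  have h2le : F 2 ≤ F K := hmono (by norm_num) (by simpa using hK) hK
  have hF2 : 0 ≤ F 2 := by
    have := Real.log_two_lt_d9
    simp only [hF]
    nlinarith
  simp only [hF] at h2le hF2
  nlinarith




noncomputable def B (K : ℝ) : ℝ := Real.log K / (K - 1)

noncomputable def E (K t : ℝ) : ℝ :=
  (1+t)*Real.log (1+t) + (K-t)*Real.log (K-t) - (K-t)*Real.log K - B K * t^2

noncomputable def Ed (K t : ℝ) : ℝ :=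
  Real.log (1+t) - Real.log (K-t) + Real.log K - 2*(B K)*t

noncomputable def Edd (K t : ℝ) : ℝ := 1/(1+t) + 1/(K-t) - 2*(B K)

lemma continuous_E (K : ℝ) : Continuous (E K) := by
  have a1 : Continuous (fun t : ℝ => 1+t) := by continuity
  have a2 : Continuous (fun t : ℝ => K-t) := by continuity
  have c1 : Continuous (fun t : ℝ => (1+t)*Real.log (1+t)) := by
    simpa [Function.comp_def] using Real.continuous_mul_log.comp a1
  have c2 : Continuous (fun t : ℝ => (K-t)*Real.log (K-t)) := by
    simpa [Function.comp_def] using Real.continuous_mul_log.comp a2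
  exact ((c1.add c2).sub ((continuous_const.sub continuous_id).mul continuous_const)).sub
    (continuous_const.mul (continuous_pow 2))

lemma hd_one_add {t : ℝ} (ht : (0:ℝ) < 1+t) :
    HasDerivAt (fun y : ℝ => (1+y)*Real.log (1+y)) (Real.log (1+t) + 1) t := by
  have h1 : HasDerivAt (fun y : ℝ => 1+y) 1 t := by
    simpa using (hasDerivAt_id t).const_add (1:ℝ)
  have h2 : HasDerivAt (fun y : ℝ => Real.log (1+y)) ((1+t)⁻¹ * 1) t :=
    (Real.hasDerivAt_log (ne_of_gt ht)).comp t h1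
  have h3 := h1.mul h2
  refine h3.congr_deriv ?_
  field_simp

lemma hd_K_sub {K t : ℝ} (ht : (0:ℝ) < K-t) :
    HasDerivAt (fun y : ℝ => (K-y)*Real.log (K-y)) (-Real.log (K-t) - 1) t := by
  have h1 : HasDerivAt (fun y : ℝ => K-y) (-1) t := by
    simpa [sub_eq_add_neg] using ((hasDerivAt_id t).neg).const_add K
  have h2 : HasDerivAt (fun y : ℝ => Real.log (K-y)) ((K-t)⁻¹ * (-1)) t :=
    (Real.hasDerivAt_log (ne_of_gt ht)).comp t h1
  have h3 := h1.mul h2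
  refine h3.congr_deriv ?_
  field_simp
  ring

lemma hasDerivAt_E {K t : ℝ} (h1 : -1 < t) (h2 : t < K) :
    HasDerivAt (E K) (Ed K t) t := by
  have e1 := hd_one_add (t := t) (by linarith)
  have e2 := hd_K_sub (K := K) (t := t) (by linarith)
  have e3 : HasDerivAt (fun y : ℝ => (K-y)*Real.log K) (-Real.log K) t := by
    have h1' : HasDerivAt (fun y : ℝ => K-y) (-1) t := by
      simpa [sub_eq_add_neg] using ((hasDerivAt_id t).neg).const_add K
    simpa using h1'.mul_const (Real.log K)
  have e4 : HasDerivAt (fun y : ℝ => B K * y^2) (B K * (2*t)) t := by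
    have := (hasDerivAt_pow 2 t).const_mul (B K)
    simpa using this
  have := ((e1.add e2).sub e3).sub e4
  refine this.congr_deriv ?_
  unfold Ed
  ring

lemma hasDerivAt_Ed {K t : ℝ} (h1 : -1 < t) (h2 : t < K) :
    HasDerivAt (Ed K) (Edd K t) t := by
  have p1 : (0:ℝ) < 1+t := by linarith
  have p2 : (0:ℝ) < K-t := by linarith
  have e1 : HasDerivAt (fun y : ℝ => Real.log (1+y)) ((1+t)⁻¹ * 1) t := by
    have h1' : HasDerivAt (fun y : ℝ => 1+y) 1 t := by
      simpa using (hasDerivAt_id t).const_add (1:ℝ)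
    exact (Real.hasDerivAt_log (ne_of_gt p1)).comp t h1'
  have e2 : HasDerivAt (fun y : ℝ => Real.log (K-y)) ((K-t)⁻¹ * (-1)) t := by
    have h1' : HasDerivAt (fun y : ℝ => K-y) (-1) t := by
      simpa [sub_eq_add_neg] using ((hasDerivAt_id t).neg).const_add K
    exact (Real.hasDerivAt_log (ne_of_gt p2)).comp t h1'
  have e4 : HasDerivAt (fun y : ℝ => 2*(B K)*y) (2*(B K)) t := by
    simpa using (hasDerivAt_id t).const_mul (2*(B K))
  have := ((e1.sub e2).add_const (Real.log K)).sub e4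
  refine this.congr_deriv ?_
  unfold Edd
  field_simp
  ring

lemma E_zero (K : ℝ) : E K 0 = 0 := by simp [E]

lemma Ed_zero (K : ℝ) : Ed K 0 = 0 := by simp [Ed]

lemma E_K1 {K : ℝ} (hK : 2 ≤ K) : E K (K-1) = 0 := by
  have hne : K - 1 ≠ 0 := by linarith
  unfold E B
  rw [show (1:ℝ)+(K-1) = K by ring, show K-(K-1) = (1:ℝ) by ring, Real.log_one]
  field_simp
  ring

lemma Ed_K1 {K : ℝ} (hK : 2 ≤ K) : Ed K (K-1) = 0 := by
  have hne : K - 1 ≠ 0 := by linarith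
  unfold Ed B
  rw [show (1:ℝ)+(K-1) = K by ring, show K-(K-1) = (1:ℝ) by ring, Real.log_one]
  field_simp
  ring

lemma Edd_nonneg {K t : ℝ} (h1 : -1 < t) (h2 : t < K)
    (hq : 2*(B K)*((1+t)*(K-t)) ≤ K+1) : 0 ≤ Edd K t := by
  have p1 : (0:ℝ) < 1+t := by linarith
  have p2 : (0:ℝ) < K-t := by linarith
  have key : Edd K t = ((K+1) - 2*(B K)*((1+t)*(K-t)))/((1+t)*(K-t)) := by
    unfold Edd; field_simp; ring
  rw [key]
  apply div_nonneg (by linarith) (by positivity)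

lemma Edd_nonpos {K t : ℝ} (h1 : -1 < t) (h2 : t < K)
    (hq : K+1 ≤ 2*(B K)*((1+t)*(K-t))) : Edd K t ≤ 0 := by
  have p1 : (0:ℝ) < 1+t := by linarith
  have p2 : (0:ℝ) < K-t := by linarith
  have key : Edd K t = ((K+1) - 2*(B K)*((1+t)*(K-t)))/((1+t)*(K-t)) := by
    unfold Edd; field_simp; ring
  rw [key]
  apply div_nonpos_of_nonpos_of_nonneg (by linarith) (by positivity)


set_option maxHeartbeats 1000000 in
theorem E_nonneg {K : ℝ} (hK : 2 ≤ K) : ∀ t ∈ Icc (0:ℝ) K, 0 ≤ E K t := by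
  have hK0 : (0:ℝ) < K := by linarith
  have hlK : 0 < Real.log K := Real.log_pos (by linarith)
  have hB : 0 < B K := div_pos hlK (by linarith)
  set R := (K^2-1)/(2*Real.log K) with hRdef
  have hne1 : K - 1 ≠ 0 := by linarith
  have hne2 : Real.log K ≠ 0 := ne_of_gt hlK
  have hRB : 2 * B K * R = K+1 := by
    unfold B
    rw [hRdef]
    field_simp
    ring
  have hKR : K ≤ R := by
    rw [hRdef, le_div_iff₀ (by positivity)]
    nlinarith [C2 hK]
  have hDsq0 : 0 ≤ (K+1)^2/4 - R := by
    rw [sub_nonneg, hRdef, div_le_div_iff₀ (by positivity) (by norm_num : (0:ℝ) < 4)]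
    nlinarith [mul_le_mul_of_nonneg_left (C1 (by linarith : (1:ℝ) ≤ K))
      (show (0:ℝ) ≤ 2*(K+1) by linarith)]
  set D := Real.sqrt ((K+1)^2/4 - R) with hDdef
  have hD0 : 0 ≤ D := Real.sqrt_nonneg _
  have hD2 : D^2 = (K+1)^2/4 - R := Real.sq_sqrt hDsq0
  have hDle : D ≤ (K-1)/2 := by
    have h' : (K+1)^2/4 - R ≤ ((K-1)/2)^2 := by nlinarith [hKR]
    calc D ≤ Real.sqrt (((K-1)/2)^2) := Real.sqrt_le_sqrt h'
      _ = (K-1)/2 := Real.sqrt_sq (by linarith)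
  clear_value R D
  set c : ℝ := (K-1)/2 with hcdef
  set t₁ : ℝ := c - D with ht₁def
  set t₂ : ℝ := c + D with ht₂def
  have ht₁0 : 0 ≤ t₁ := by rw [ht₁def, hcdef]; linarith
  have ht₁₂ : t₁ ≤ t₂ := by rw [ht₁def, ht₂def]; linarith
  have ht₂K1 : t₂ ≤ K-1 := by rw [ht₂def, hcdef]; linarith
  have ht₂K : t₂ < K := by linarith
  have ht₁K : t₁ < K := by linarith
  -- sign lemmas
  have hsign_out : ∀ t : ℝ, -1 < t → t < K → D^2 ≤ (t-c)^2 → 0 ≤ Edd K t := by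
    intro t ha hb hd
    apply Edd_nonneg ha hb
    have hq : (1+t)*(K-t) ≤ R := by
      have : (1+t)*(K-t) = (K+1)^2/4 - (t-c)^2 := by rw [hcdef]; ring
      rw [this]; linarith [hd, hD2]
    calc 2*(B K)*((1+t)*(K-t)) ≤ 2*(B K)*R := by
          apply mul_le_mul_of_nonneg_left hq (by positivity)
      _ = K+1 := hRB
  have hsign_in : ∀ t : ℝ, -1 < t → t < K → (t-c)^2 ≤ D^2 → Edd K t ≤ 0 := by
    intro t ha hb hd
    apply Edd_nonpos ha hb
    have hq : R ≤ (1+t)*(K-t) := by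
      have : (1+t)*(K-t) = (K+1)^2/4 - (t-c)^2 := by rw [hcdef]; ring
      rw [this]; linarith [hd, hD2]
    calc K+1 = 2*(B K)*R := hRB.symm
      _ ≤ 2*(B K)*((1+t)*(K-t)) := by
          apply mul_le_mul_of_nonneg_left hq (by positivity)
  have contE : Continuous (E K) := continuous_E K
  -- Piece 1 : [0, t₁]
  have mono_Ed1 : MonotoneOn (Ed K) (Icc 0 t₁) := by
    apply monotoneOn_of_deriv_nonneg (convex_Icc _ _)
    · intro x hx
      obtain ⟨hx0, hx1⟩ := hx
      exact ((hasDerivAt_Ed (by linarith) (by linarith)).continuousAt).continuousWithinAt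
    · intro x hx
      rw [interior_Icc] at hx
      obtain ⟨hx0, hx1⟩ := hx
      exact ((hasDerivAt_Ed (by linarith) (by linarith)).differentiableAt).differentiableWithinAt
    · intro x hx
      rw [interior_Icc] at hx
      obtain ⟨hx0, hx1⟩ := hx
      rw [(hasDerivAt_Ed (by linarith) (by linarith)).deriv]
      apply hsign_out x (by linarith) (by linarith)
      have hcx : D ≤ c - x := by rw [ht₁def] at hx1; linarith
      nlinarith [hD0]
  have Ed_nonneg1 : ∀ t ∈ Icc (0:ℝ) t₁, 0 ≤ Ed K t := by
    intro t ht
    calc (0:ℝ) = Ed K 0 := (Ed_zero K).symm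
      _ ≤ Ed K t := mono_Ed1 (left_mem_Icc.mpr ht₁0) ht ht.1
  have mono_E1 : MonotoneOn (E K) (Icc 0 t₁) := by
    apply monotoneOn_of_deriv_nonneg (convex_Icc _ _) contE.continuousOn
    · intro x hx
      rw [interior_Icc] at hx
      obtain ⟨hx0, hx1⟩ := hx
      exact ((hasDerivAt_E (by linarith) (by linarith)).differentiableAt).differentiableWithinAt
    · intro x hx
      rw [interior_Icc] at hx
      obtain ⟨hx0, hx1⟩ := hx
      rw [(hasDerivAt_E (by linarith) (by linarith)).deriv]
      exact Ed_nonneg1 x ⟨le_of_lt hx0, le_of_lt hx1⟩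
  have hE1 : ∀ t ∈ Icc (0:ℝ) t₁, 0 ≤ E K t := by
    intro t ht
    calc (0:ℝ) = E K 0 := (E_zero K).symm
      _ ≤ E K t := mono_E1 (left_mem_Icc.mpr ht₁0) ht ht.1
  -- Piece 2 : [t₂, K-1]
  have mono_Ed2 : MonotoneOn (Ed K) (Icc t₂ (K-1)) := by
    apply monotoneOn_of_deriv_nonneg (convex_Icc _ _)
    · intro x hx
      obtain ⟨hx0, hx1⟩ := hx
      exact ((hasDerivAt_Ed (by linarith) (by linarith)).continuousAt).continuousWithinAt
    · intro x hx
      rw [interior_Icc] at hx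
      obtain ⟨hx0, hx1⟩ := hx
      exact ((hasDerivAt_Ed (by linarith) (by linarith)).differentiableAt).differentiableWithinAt
    · intro x hx
      rw [interior_Icc] at hx
      obtain ⟨hx0, hx1⟩ := hx
      rw [(hasDerivAt_Ed (by linarith) (by linarith)).deriv]
      apply hsign_out x (by linarith) (by linarith)
      have hcx : D ≤ x - c := by rw [ht₂def] at hx0; linarith
      nlinarith [hD0]
  have Ed_nonpos2 : ∀ t ∈ Icc t₂ (K-1), Ed K t ≤ 0 := by
    intro t ht
    calc Ed K t ≤ Ed K (K-1) := mono_Ed2 ht (right_mem_Icc.mpr ht₂K1) ht.2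
      _ = 0 := Ed_K1 hK
  have anti_E2 : AntitoneOn (E K) (Icc t₂ (K-1)) := by
    apply antitoneOn_of_deriv_nonpos (convex_Icc _ _) contE.continuousOn
    · intro x hx
      rw [interior_Icc] at hx
      obtain ⟨hx0, hx1⟩ := hx
      exact ((hasDerivAt_E (by linarith) (by linarith)).differentiableAt).differentiableWithinAt
    · intro x hx
      rw [interior_Icc] at hx
      obtain ⟨hx0, hx1⟩ := hx
      rw [(hasDerivAt_E (by linarith) (by linarith)).deriv]
      exact Ed_nonpos2 x ⟨le_of_lt hx0, le_of_lt hx1⟩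
  have hE2 : ∀ t ∈ Icc t₂ (K-1), 0 ≤ E K t := by
    intro t ht
    calc (0:ℝ) = E K (K-1) := (E_K1 hK).symm
      _ ≤ E K t := anti_E2 ht (right_mem_Icc.mpr ht₂K1) ht.2
  -- Piece 3 : [t₁, t₂]
  have anti_Ed3 : AntitoneOn (Ed K) (Icc t₁ t₂) := by
    apply antitoneOn_of_deriv_nonpos (convex_Icc _ _)
    · intro x hx
      obtain ⟨hx0, hx1⟩ := hx
      exact ((hasDerivAt_Ed (by linarith) (by linarith)).continuousAt).continuousWithinAt
    · intro x hx
      rw [interior_Icc] at hx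
      obtain ⟨hx0, hx1⟩ := hx
      exact ((hasDerivAt_Ed (by linarith) (by linarith)).differentiableAt).differentiableWithinAt
    · intro x hx
      rw [interior_Icc] at hx
      obtain ⟨hx0, hx1⟩ := hx
      rw [(hasDerivAt_Ed (by linarith) (by linarith)).deriv]
      apply hsign_in x (by linarith) (by linarith)
      rw [ht₁def] at hx0; rw [ht₂def] at hx1
      nlinarith [hD0]
  have conc_E3 : ConcaveOn ℝ (Icc t₁ t₂) (E K) := by
    apply AntitoneOn.concaveOn_of_deriv (convex_Icc _ _) contE.continuousOn
    · intro x hx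
      rw [interior_Icc] at hx
      obtain ⟨hx0, hx1⟩ := hx
      exact ((hasDerivAt_E (by linarith) (by linarith)).differentiableAt).differentiableWithinAt
    · intro a ha b hb hab
      rw [interior_Icc] at ha hb
      obtain ⟨ha0, ha1⟩ := ha
      obtain ⟨hb0, hb1⟩ := hb
      rw [(hasDerivAt_E (by linarith) (by linarith)).deriv,
          (hasDerivAt_E (by linarith) (by linarith)).deriv]
      exact anti_Ed3 ⟨le_of_lt ha0, le_of_lt ha1⟩ ⟨le_of_lt hb0, le_of_lt hb1⟩ hab
  have hE3 : ∀ t ∈ Icc t₁ t₂, 0 ≤ E K t := by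
    intro t ht
    rcases eq_or_lt_of_le ht₁₂ with heq | hlt
    · have htt : t = t₁ := le_antisymm (heq ▸ ht.2) ht.1
      rw [htt]
      exact hE1 t₁ ⟨ht₁0, le_refl _⟩
    · set a := (t₂ - t)/(t₂ - t₁) with hadef
      set b := (t - t₁)/(t₂ - t₁) with hbdef
      have ha : 0 ≤ a := div_nonneg (by linarith [ht.2]) (by linarith)
      have hb : 0 ≤ b := div_nonneg (by linarith [ht.1]) (by linarith)
      have hab : a + b = 1 := by
        rw [hadef, hbdef, ← add_div, div_eq_one_iff_eq (by linarith)]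
        ring
      have hne : t₂ - t₁ ≠ 0 := ne_of_gt (by linarith)
      have hcomb : a • t₁ + b • t₂ = t := by
        simp only [smul_eq_mul, hadef, hbdef]
        rw [div_mul_eq_mul_div, div_mul_eq_mul_div, ← add_div, div_eq_iff hne]
        ring
      have hcc := conc_E3.2 (left_mem_Icc.mpr ht₁₂) (right_mem_Icc.mpr ht₁₂) ha hb hab
      rw [hcomb] at hcc
      simp only [smul_eq_mul] at hcc
      have e1 := hE1 t₁ ⟨ht₁0, le_refl _⟩
      have e2 := hE2 t₂ ⟨le_refl _, ht₂K1⟩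
      nlinarith [mul_nonneg ha e1, mul_nonneg hb e2]
  -- Piece 4 : [K-1, K]
  have mono_E4 : MonotoneOn (E K) (Icc (K-1) K) := by
    apply monotoneOn_of_deriv_nonneg (convex_Icc _ _) contE.continuousOn
    · intro x hx
      rw [interior_Icc] at hx
      obtain ⟨hx0, hx1⟩ := hx
      exact ((hasDerivAt_E (by linarith) (by linarith)).differentiableAt).differentiableWithinAt
    · intro x hx
      rw [interior_Icc] at hx
      obtain ⟨hx0, hx1⟩ := hx
      rw [(hasDerivAt_E (by linarith) (by linarith)).deriv]
      -- Ed K x ≥ Ed K (K-1) = 0 via monotonicity of Ed on [K-1, x]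
      have mono_Ed4 : MonotoneOn (Ed K) (Icc (K-1) x) := by
        apply monotoneOn_of_deriv_nonneg (convex_Icc _ _)
        · intro s hs
          obtain ⟨hs0, hs1⟩ := hs
          exact ((hasDerivAt_Ed (by linarith) (by linarith)).continuousAt).continuousWithinAt
        · intro s hs
          rw [interior_Icc] at hs
          obtain ⟨hs0, hs1⟩ := hs
          exact ((hasDerivAt_Ed (by linarith) (by linarith)).differentiableAt).differentiableWithinAt
        · intro s hs
          rw [interior_Icc] at hs
          obtain ⟨hs0, hs1⟩ := hs
          rw [(hasDerivAt_Ed (by linarith) (by linarith)).deriv]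
          apply Edd_nonneg (by linarith) (by linarith)
          have hq1 : (1+s)*(K-s) ≤ K := by nlinarith
          calc 2*(B K)*((1+s)*(K-s)) ≤ 2*(B K)*R := by
                apply mul_le_mul_of_nonneg_left (le_trans hq1 hKR) (by positivity)
            _ = K+1 := hRB
      calc (0:ℝ) = Ed K (K-1) := (Ed_K1 hK).symm
        _ ≤ Ed K x := mono_Ed4 (left_mem_Icc.mpr (by linarith)) (right_mem_Icc.mpr (by linarith)) (by linarith)
  have hE4 : ∀ t ∈ Icc (K-1) K, 0 ≤ E K t := by
    intro t ht
    calc (0:ℝ) = E K (K-1) := (E_K1 hK).symm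
      _ ≤ E K t := mono_E4 (left_mem_Icc.mpr (by linarith)) ht ht.1
  -- combine
  intro t ht
  obtain ⟨ht0, htK⟩ := ht
  by_cases h1 : t ≤ t₁
  · exact hE1 t ⟨ht0, h1⟩
  · by_cases h2 : t ≤ t₂
    · exact hE3 t ⟨le_of_not_ge h1, h2⟩
    · by_cases h3 : t ≤ K-1
      · exact hE2 t ⟨le_of_not_ge h2, h3⟩
      · exact hE4 t ⟨le_of_not_ge h3, htK⟩

noncomputable def fK (K t : ℝ) : ℝ := h t - (Real.log K / K) * t^2

lemma fK_zero (K : ℝ) : fK K 0 = 0 := by simp [fK, h]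

lemma continuous_fK (K : ℝ) : Continuous (fK K) := by
  have a1 : Continuous (fun t : ℝ => 1+t) := by continuity
  have c1 : Continuous (fun t : ℝ => (1+t)*Real.log (1+t)) := by
    simpa [Function.comp_def] using Real.continuous_mul_log.comp a1
  have ch : Continuous h := by
    unfold h; exact c1.sub continuous_id
  exact ch.sub (continuous_const.mul (continuous_pow 2))

lemma hasDerivAt_fK {K t : ℝ} (ht : (0:ℝ) < 1+t) :
    HasDerivAt (fK K) (Real.log (1+t) - 2*(Real.log K/K)*t) t := by
  have e1 := hd_one_add ht
  have e2 : HasDerivAt (fun y:ℝ => y) 1 t := hasDerivAt_id t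
  have e3 : HasDerivAt (fun y:ℝ => (Real.log K/K)*y^2) ((Real.log K/K)*(2*t)) t := by
    simpa using (hasDerivAt_pow 2 t).const_mul (Real.log K/K)
  have := (e1.sub e2).sub e3
  have heq : (fun y : ℝ => (1+y)*Real.log (1+y) - y - (Real.log K/K)*y^2) = fK K := by
    funext y; simp [fK, h]
  rw [← heq]
  refine this.congr_deriv ?_
  ring

lemma rho_le_half {K : ℝ} (hK : 2 ≤ K) : Real.log K / K ≤ 1/2 := by
  have hK0 : (0:ℝ) < K := by linarith
  rw [div_le_iff₀ hK0]
  nlinarith [C2 hK, hK0]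

lemma fK_nonneg_neg {K : ℝ} (hK : 2 ≤ K) : ∀ t ∈ Icc (-1:ℝ) 0, 0 ≤ fK K t := by
  have hK0 : (0:ℝ) < K := by linarith
  have hrho := rho_le_half hK
  have anti : AntitoneOn (fK K) (Icc (-1:ℝ) 0) := by
    apply antitoneOn_of_deriv_nonpos (convex_Icc _ _) (continuous_fK K).continuousOn
    · intro x hx
      rw [interior_Icc] at hx
      obtain ⟨hx0, hx1⟩ := hx
      exact ((hasDerivAt_fK (by linarith)).differentiableAt).differentiableWithinAt
    · intro x hx
      rw [interior_Icc] at hx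
      obtain ⟨hx0, hx1⟩ := hx
      rw [(hasDerivAt_fK (by linarith)).deriv]
      have l1 : Real.log (1+x) ≤ x := by
        have := Real.log_le_sub_one_of_pos (show (0:ℝ) < 1+x by linarith)
        linarith
      have l2 : x*(1-2*(Real.log K/K)) ≤ 0 :=
        mul_nonpos_of_nonpos_of_nonneg (le_of_lt hx1) (by linarith)
      nlinarith [l1, l2]
  intro t ht
  calc (0:ℝ) = fK K 0 := (fK_zero K).symm
    _ ≤ fK K t := anti ht (right_mem_Icc.mpr (by norm_num)) ht.2

lemma convexOn_fK {K : ℝ} (hK : 2 ≤ K) : ConvexOn ℝ (Icc (-1:ℝ) 0) (fK K) := by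
  have hK0 : (0:ℝ) < K := by linarith
  have hrho := rho_le_half hK
  apply MonotoneOn.convexOn_of_deriv (convex_Icc _ _) (continuous_fK K).continuousOn
  · intro x hx
    rw [interior_Icc] at hx
    obtain ⟨hx0, hx1⟩ := hx
    exact ((hasDerivAt_fK (by linarith)).differentiableAt).differentiableWithinAt
  · rw [interior_Icc]
    intro a ha b hb hab
    obtain ⟨ha0, ha1⟩ := ha
    obtain ⟨hb0, hb1⟩ := hb
    rw [(hasDerivAt_fK (by linarith : (0:ℝ) < 1+a)).deriv,
        (hasDerivAt_fK (by linarith : (0:ℝ) < 1+b)).deriv]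
    have pa : (0:ℝ) < 1+a := by linarith
    have pb : (0:ℝ) < 1+b := by linarith
    have l1 : 1 - (1+a)/(1+b) ≤ Real.log ((1+b)/(1+a)) := by
      have := log_ge_one_sub_inv (show (0:ℝ) < (1+b)/(1+a) by positivity)
      rwa [one_div_div] at this
    rw [Real.log_div (ne_of_gt pb) (ne_of_gt pa)] at l1
    have l2 : 1 - (1+a)/(1+b) = (b-a)/(1+b) := by field_simp; ring
    have l3 : b - a ≤ (b-a)/(1+b) := by
      rw [le_div_iff₀ pb]
      nlinarith [mul_nonpos_of_nonneg_of_nonpos (show (0:ℝ) ≤ b - a by linarith) (le_of_lt hb1)]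
    have l4 : 2*(Real.log K/K)*(b-a) ≤ b - a := by
      nlinarith [show (0:ℝ) ≤ b - a by linarith]
    rw [l2] at l1
    linarith

lemma star {K : ℝ} (hK : 2 ≤ K) {p : ℝ} (hp0 : 0 ≤ p) (hpK : p ≤ K) :
    0 ≤ fK K p + K * fK K (-p/K) := by
  have hK0 : (0:ℝ) < K := by linarith
  have hne0 : K ≠ 0 := ne_of_gt hK0
  have hne1 : K - 1 ≠ 0 := by linarith
  have hlK : 0 < Real.log K := Real.log_pos (by linarith)
  have hA : K*((1 - p/K)*Real.log (1 - p/K))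
      = (K-p)*Real.log (K-p) - (K-p)*Real.log K := by
    rcases eq_or_lt_of_le hpK with heq | hlt
    · rw [heq]
      simp [div_self hne0]
    · have h1 : 1 - p/K = (K-p)/K := by field_simp
      rw [h1, Real.log_div (ne_of_gt (by linarith)) hne0]
      field_simp
  have e2 : K * fK K (-p/K)
      = (K-p)*Real.log (K-p) - (K-p)*Real.log K + p - Real.log K*p^2/K^2 := by
    unfold fK h
    rw [show (1:ℝ) + -p/K = 1 - p/K by ring]
    have e3 : K * ((1 - p/K) * Real.log (1 - p/K) - (-p/K) - Real.log K/K*(-p/K)^2)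
        = K*((1 - p/K)*Real.log (1 - p/K)) + p - Real.log K*p^2/K^2 := by
      field_simp
      ring
    rw [e3, hA]
  have main : fK K p + K * fK K (-p/K)
      = E K p + (B K - (K+1)*Real.log K/K^2)*p^2 := by
    rw [e2]
    unfold fK h E B
    field_simp
    ring
  have hcoef : 0 ≤ B K - (K+1)*Real.log K/K^2 := by
    rw [sub_nonneg]
    unfold B
    rw [div_le_div_iff₀ (by positivity) (by linarith : (0:ℝ) < K - 1)]
    nlinarith [hlK]
  rw [main]
  have hE := E_nonneg hK p ⟨hp0, hpK⟩
  nlinarith [mul_nonneg hcoef (sq_nonneg p)]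

set_option maxHeartbeats 1000000 in
theorem h_ineq (k : ℕ) (hk : 3 ≤ k) (u : Fin k → ℝ)
    (hsum : ∑ j, u j = 0) (hlb : ∀ j, -1 ≤ u j) (hub : ∀ j, u j ≤ (k : ℝ) - 1) :
    (Real.log ((k : ℝ) - 1) / ((k : ℝ) - 1)) * ∑ j, (u j) ^ 2 ≤ ∑ j, h (u j) := by
  classical
  set K : ℝ := (k:ℝ) - 1 with hKdef
  have hk3 : (3:ℝ) ≤ (k:ℝ) := by exact_mod_cast hk
  have hK : 2 ≤ K := by rw [hKdef]; linarith
  have hK0 : (0:ℝ) < K := by linarith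
  suffices hS : 0 ≤ ∑ j, fK K (u j) by
    have expand : ∑ j, fK K (u j)
        = ∑ j, h (u j) - (Real.log K/K) * ∑ j, (u j)^2 := by
      calc ∑ j, fK K (u j)
          = ∑ j, (h (u j) - (Real.log K/K)*(u j)^2) := rfl
        _ = ∑ j, h (u j) - ∑ j, (Real.log K/K)*(u j)^2 := Finset.sum_sub_distrib _ _
        _ = ∑ j, h (u j) - (Real.log K/K)*∑ j, (u j)^2 := by rw [Finset.mul_sum]
    rw [expand] at hS
    linarith
  set P : Finset (Fin k) := Finset.univ.filter (fun j => 0 ≤ u j) with hPdef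
  set N : Finset (Fin k) := Finset.univ.filter (fun j => ¬ 0 ≤ u j) with hNdef
  have hsplitsum : ∀ g : Fin k → ℝ,
      ∑ j ∈ P, g j + ∑ j ∈ N, g j = ∑ j, g j := fun g =>
    Finset.sum_filter_add_sum_filter_not Finset.univ _ g
  have hPmem : ∀ j ∈ P, 0 ≤ u j := fun j hj => (Finset.mem_filter.mp hj).2
  have hNeg : ∀ j ∈ N, u j < 0 := fun j hj =>
    lt_of_not_ge (fun hc => (Finset.mem_filter.mp hj).2 hc)
  set b : ℝ := ∑ j ∈ P, u j with hbdef
  have hbnn : 0 ≤ b := Finset.sum_nonneg hPmem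
  have hNsum : ∑ j ∈ N, u j = -b := by
    have := hsplitsum u
    rw [hsum] at this
    linarith
  have hcover : ∀ j, j ∈ P ∨ j ∈ N := by
    intro j
    by_cases hj : 0 ≤ u j
    · exact Or.inl (Finset.mem_filter.mpr ⟨Finset.mem_univ _, hj⟩)
    · exact Or.inr (Finset.mem_filter.mpr ⟨Finset.mem_univ _, hj⟩)
  have hdisj : ∀ j, j ∈ P → j ∉ N := by
    intro j hjP hjN
    exact (Finset.mem_filter.mp hjN).2 (Finset.mem_filter.mp hjP).2
  clear_value K P N b
  by_cases hb0 : b = 0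
  · have hPzero : ∀ j ∈ P, u j = 0 :=
      (Finset.sum_eq_zero_iff_of_nonneg hPmem).mp (by rw [← hbdef]; exact hb0)
    have hNempty : N = ∅ := by
      by_contra hne
      have hlt : ∑ j ∈ N, u j < 0 :=
        Finset.sum_neg hNeg (Finset.nonempty_iff_ne_empty.mpr hne)
      rw [hNsum, hb0] at hlt
      norm_num at hlt
    have hall : ∀ j, u j = 0 := by
      intro j
      rcases hcover j with hj | hj
      · exact hPzero j hj
      · exfalso
        rw [hNempty] at hj
        simp at hj
    have hzero : ∑ j, fK K (u j) = 0 :=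
      Finset.sum_eq_zero (fun j _ => by rw [hall j, fK_zero])
    rw [hzero]
  · have hbpos : 0 < b := lt_of_le_of_ne hbnn (Ne.symm hb0)
    have hNne : N.Nonempty := by
      by_contra hne
      rw [Finset.not_nonempty_iff_eq_empty] at hne
      rw [hne, Finset.sum_empty] at hNsum
      linarith
    have hPne : P.Nonempty := by
      by_contra hne
      rw [Finset.not_nonempty_iff_eq_empty] at hne
      have : b = 0 := by rw [hbdef, hne, Finset.sum_empty]
      exact hb0 this
    set m : ℕ := N.card with hmdef
    have hm1 : 0 < m := Finset.card_pos.mpr hNne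
    have hmR : (0:ℝ) < (m:ℝ) := by exact_mod_cast hm1
    have hmK : (m:ℝ) ≤ K := by
      obtain ⟨j₀, hj₀⟩ := hPne
      have hj₀N : j₀ ∉ N := hdisj j₀ hj₀
      have hss : N ⊂ Finset.univ :=
        (Finset.ssubset_iff_of_subset (Finset.subset_univ N)).mpr
          ⟨j₀, Finset.mem_univ _, hj₀N⟩
      have hcard : m < k := by
        rw [hmdef]
        have := Finset.card_lt_card hss
        simpa using this
      have hcast : (m:ℝ) + 1 ≤ (k:ℝ) := by exact_mod_cast hcard
      rw [hKdef]; linarith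
    have hbm : b ≤ (m:ℝ) := by
      have hle : ∀ j ∈ N, -u j ≤ 1 := fun j hj => by linarith [hlb j]
      have hsumle : ∑ j ∈ N, (-u j) ≤ ∑ j ∈ N, (1:ℝ) := Finset.sum_le_sum hle
      rw [Finset.sum_neg_distrib, hNsum, Finset.sum_const] at hsumle
      simpa using hsumle
    clear_value m
    have hbK : b ≤ K := le_trans hbm hmK
    set t₀ : ℝ := -b/K with ht₀def
    have ht₀mem : t₀ ∈ Icc (-1:ℝ) 0 := by
      constructor
      · rw [ht₀def]
        have : b/K ≤ 1 := (div_le_one hK0).mpr hbK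
        have hrw : -b/K = -(b/K) := by ring
        rw [hrw]; linarith
      · rw [ht₀def]
        have : 0 ≤ b/K := by positivity
        have hrw : -b/K = -(b/K) := by ring
        rw [hrw]; linarith
    clear_value t₀
    have hcvx := convexOn_fK hK
    have humem : ∀ j ∈ N, u j ∈ Icc (-1:ℝ) 0 := fun j hj =>
      ⟨hlb j, le_of_lt (hNeg j hj)⟩
    -- Jensen on the negative part
    have hwsum : (0:ℝ) < ∑ _i ∈ N, (1:ℝ) := by
      rw [Finset.sum_const, nsmul_eq_mul, mul_one]
      rw [← hmdef]
      exact hmR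
    have hjensen := hcvx.map_centerMass_le (t := N) (w := fun _ => (1:ℝ))
      (fun i _ => zero_le_one) hwsum humem
    have hcm1 : N.centerMass (fun _ => (1:ℝ)) u = (m:ℝ)⁻¹ * (-b) := by
      simp [Finset.centerMass, Finset.sum_const, smul_eq_mul, hNsum, hmdef]
    have hcm2 : N.centerMass (fun _ => (1:ℝ)) (fK K ∘ u)
        = (m:ℝ)⁻¹ * ∑ j ∈ N, fK K (u j) := by
      simp [Finset.centerMass, Finset.sum_const, smul_eq_mul, hmdef, Function.comp]
    rw [hcm1, hcm2] at hjensen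
    have hjensen' : (m:ℝ) * fK K ((m:ℝ)⁻¹ * (-b)) ≤ ∑ j ∈ N, fK K (u j) := by
      have := mul_le_mul_of_nonneg_left hjensen (le_of_lt hmR)
      calc (m:ℝ) * fK K ((m:ℝ)⁻¹ * (-b)) ≤ (m:ℝ) * ((m:ℝ)⁻¹ * ∑ j ∈ N, fK K (u j)) := this
        _ = ∑ j ∈ N, fK K (u j) := by field_simp
    -- scaling : K * fK t₀ ≤ m * fK(-b/m)
    have hval : (m:ℝ)⁻¹ * (-b) = -b/(m:ℝ) := by ring
    have hbmmem : -b/(m:ℝ) ∈ Icc (-1:ℝ) 0 := by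
      constructor
      · have : b/(m:ℝ) ≤ 1 := (div_le_one hmR).mpr hbm
        have hrw : -b/(m:ℝ) = -(b/(m:ℝ)) := by ring
        rw [hrw]; linarith
      · have : 0 ≤ b/(m:ℝ) := by positivity
        have hrw : -b/(m:ℝ) = -(b/(m:ℝ)) := by ring
        rw [hrw]; linarith
    have hscale : fK K t₀ ≤ ((m:ℝ)/K) * fK K (-b/(m:ℝ)) := by
      have hw1 : (0:ℝ) ≤ (m:ℝ)/K := by positivity
      have hw2 : (0:ℝ) ≤ 1 - (m:ℝ)/K := by
        rw [sub_nonneg, div_le_one hK0]; exact hmK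
      have hcomb := hcvx.2 hbmmem (⟨by norm_num, le_refl (0:ℝ)⟩ : (0:ℝ) ∈ Icc (-1:ℝ) 0)
        hw1 hw2 (by field_simp; ring)
      have harg : ((m:ℝ)/K) • (-b/(m:ℝ)) + (1 - (m:ℝ)/K) • (0:ℝ) = t₀ := by
        simp only [smul_eq_mul, ht₀def]
        field_simp
        ring
      rw [harg, fK_zero] at hcomb
      simpa using hcomb
    have hNbound : K * fK K t₀ ≤ ∑ j ∈ N, fK K (u j) := by
      have h1 : K * fK K t₀ ≤ K * (((m:ℝ)/K) * fK K (-b/(m:ℝ))) :=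
        mul_le_mul_of_nonneg_left hscale (le_of_lt hK0)
      have h2 : K * (((m:ℝ)/K) * fK K (-b/(m:ℝ))) = (m:ℝ) * fK K (-b/(m:ℝ)) := by
        field_simp
      rw [h2] at h1
      rw [hval] at hjensen'
      exact le_trans h1 hjensen'
    -- positive side
    have hPbound : ∀ j ∈ P, -(u j) * (K * fK K t₀) ≤ b * fK K (u j) := by
      intro j hj
      have hp0 : 0 ≤ u j := hPmem j hj
      have hpb : u j ≤ b := by rw [hbdef]; exact Finset.single_le_sum hPmem hj
      have hpK : u j ≤ K := le_trans hpb hbK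
      have hL3 : fK K (-(u j)/K) ≤ (u j/b) * fK K t₀ := by
        have hw1 : 0 ≤ u j / b := by positivity
        have hw2 : 0 ≤ 1 - u j / b := by
          rw [sub_nonneg, div_le_one hbpos]; exact hpb
        have hcomb := hcvx.2 ht₀mem (⟨by norm_num, le_refl (0:ℝ)⟩ : (0:ℝ) ∈ Icc (-1:ℝ) 0)
          hw1 hw2 (by field_simp; ring)
        have harg : (u j/b) • t₀ + (1 - u j/b) • (0:ℝ) = -(u j)/K := by
          simp only [smul_eq_mul, ht₀def]
          field_simp
          ring
        rw [harg, fK_zero] at hcomb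
        simpa using hcomb
      have hstar := star hK hp0 hpK
      have hmul : b * (K * fK K (-(u j)/K)) ≤ (u j) * (K * fK K t₀) := by
        calc b * (K * fK K (-(u j)/K))
            ≤ b * (K * ((u j/b) * fK K t₀)) := by
              apply mul_le_mul_of_nonneg_left
                (mul_le_mul_of_nonneg_left hL3 (le_of_lt hK0)) hbnn
          _ = (u j) * (K * fK K t₀) := by field_simp
      have hscaled : 0 ≤ b * fK K (u j) + b * (K * fK K (-(u j)/K)) := by
        have : 0 ≤ b * (fK K (u j) + K * fK K (-(u j)/K)) := mul_nonneg hbnn hstar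
        linarith [this, mul_add b (fK K (u j)) (K * fK K (-(u j)/K))]
      nlinarith [hmul, hscaled]
    have h1 : -(b*(K * fK K t₀)) ≤ b * ∑ j ∈ P, fK K (u j) := by
      have hsn : ∑ j ∈ P, (-(u j)) = -b := by
        rw [Finset.sum_neg_distrib, ← hbdef]
      calc -(b*(K * fK K t₀))
          = ∑ j ∈ P, (-(u j) * (K * fK K t₀)) := by
            rw [← Finset.sum_mul, hsn]; ring
        _ ≤ ∑ j ∈ P, (b * fK K (u j)) := Finset.sum_le_sum hPbound
        _ = b * ∑ j ∈ P, fK K (u j) := by rw [Finset.mul_sum]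
    have h2 : -(K * fK K t₀) ≤ ∑ j ∈ P, fK K (u j) := by
      by_contra hcon
      push_neg at hcon
      have := mul_lt_mul_of_pos_left hcon hbpos
      rw [mul_neg] at this
      linarith
    have htotal := hsplitsum (fun j => fK K (u j))
    rw [← htotal]
    linarith
end

section
/- For every integer k ≥ 3, the function g_k(s) = h(s) - ρ_k s² (where h(s) = (1+s)log(1+s) - s and ρ_k = log(k-1)/(k-1)) is nonnegative on the interval [0, (k-2)/2]. -/
private lemma F_nonneg_of_deriv {F F' : ℝ → ℝ} {b : ℝ}
    (hd : ∀ x ∈ Set.Icc (0:ℝ) b, HasDerivAt F (F' x) x)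
    (h0 : ∀ x ∈ Set.Icc (0:ℝ) b, 0 ≤ F' x) {x : ℝ} (hx : x ∈ Set.Icc (0:ℝ) b) :
    F 0 ≤ F x := by
  have hmono : MonotoneOn F (Set.Icc (0:ℝ) b) := by
    apply monotoneOn_of_deriv_nonneg (convex_Icc 0 b)
    · exact fun y hy => (hd y hy).continuousAt.continuousWithinAt
    · intro y hy
      exact (hd y (interior_subset hy)).differentiableAt.differentiableWithinAt
    · intro y hy
      rw [(hd y (interior_subset hy)).deriv]
      exact h0 y (interior_subset hy)
  exact hmono (Set.left_mem_Icc.2 (hx.1.trans hx.2)) hx hx.1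

private lemma hasDerivAt_log1p {y : ℝ} (hy : -1 < y) :
    HasDerivAt (fun t : ℝ => Real.log (1 + t)) (1/(1+y)) y := by
  have h1 : HasDerivAt (fun t : ℝ => 1 + t) 1 y := by
    simpa using (hasDerivAt_id y).const_add (1:ℝ)
  have := (Real.hasDerivAt_log (by linarith : (1:ℝ)+y ≠ 0)).comp y h1
  simpa [one_div, Function.comp_def] using this

private lemma hasDerivAt_poly5 (y : ℝ) :
    HasDerivAt (fun t : ℝ => t - t^2/2 + t^3/3 - t^4/4 + t^5/5)
      (1 - y + y^2 - y^3 + y^4) y := by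
  have h1 := hasDerivAt_id y
  have h2 := (hasDerivAt_pow 2 y).div_const 2
  have h3 := (hasDerivAt_pow 3 y).div_const 3
  have h4 := (hasDerivAt_pow 4 y).div_const 4
  have h5 := (hasDerivAt_pow 5 y).div_const 5
  have := (((h1.sub h2).add h3).sub h4).add h5
  refine this.congr_deriv ?_
  push_cast
  ring

lemma log_lower_sum4 {x : ℝ} (hx : 0 ≤ x) :
    x - x^2/2 + x^3/3 - x^4/4 ≤ Real.log (1+x) := by
  set F : ℝ → ℝ := fun t => Real.log (1+t) - (t - t^2/2 + t^3/3 - t^4/4) with hF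
  have key : ∀ y ∈ Set.Icc (0:ℝ) x, HasDerivAt F (y^4/(1+y)) y := by
    intro y hy
    have hy0 : (0:ℝ) ≤ y := hy.1
    have h1 : HasDerivAt (fun t : ℝ => Real.log (1+t)) (1/(1+y)) y :=
      hasDerivAt_log1p (by linarith)
    have h2 := hasDerivAt_id y
    have h3 := (hasDerivAt_pow 2 y).div_const 2
    have h4 := (hasDerivAt_pow 3 y).div_const 3
    have h5 := (hasDerivAt_pow 4 y).div_const 4
    have := h1.sub (((h2.sub h3).add h4).sub h5)
    refine this.congr_deriv ?_
    have : (1:ℝ)+y ≠ 0 := by positivity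
    field_simp
    ring
  have h0 : ∀ y ∈ Set.Icc (0:ℝ) x, 0 ≤ y^4/(1+y) := by
    intro y hy; have := hy.1; positivity
  have := F_nonneg_of_deriv key h0 (Set.mem_Icc.2 ⟨hx, le_refl x⟩)
  simp only [hF] at this
  norm_num at this
  linarith [this]

lemma log_upper_sum5 {x : ℝ} (hx : 0 ≤ x) :
    Real.log (1+x) ≤ x - x^2/2 + x^3/3 - x^4/4 + x^5/5 := by
  set F : ℝ → ℝ := fun t => (t - t^2/2 + t^3/3 - t^4/4 + t^5/5) - Real.log (1+t) with hF
  have key : ∀ y ∈ Set.Icc (0:ℝ) x, HasDerivAt F (y^5/(1+y)) y := by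
    intro y hy
    have hy0 : (0:ℝ) ≤ y := hy.1
    have h1 : HasDerivAt (fun t : ℝ => Real.log (1+t)) (1/(1+y)) y :=
      hasDerivAt_log1p (by linarith)
    have := (hasDerivAt_poly5 y).sub h1
    refine this.congr_deriv ?_
    have : (1:ℝ)+y ≠ 0 := by positivity
    field_simp
    ring
  have h0 : ∀ y ∈ Set.Icc (0:ℝ) x, 0 ≤ y^5/(1+y) := by
    intro y hy; have := hy.1; positivity
  have := F_nonneg_of_deriv key h0 (Set.mem_Icc.2 ⟨hx, le_refl x⟩)
  simp only [hF] at this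
  norm_num at this
  linarith [this]

-- lower bound for log(1-t):  log(1-t) ≥ -t - t²/(2(1-t)) for t ∈ [0, 1/2]
lemma log_lower_neg {x : ℝ} (hx0 : 0 ≤ x) (hx1 : x ≤ 1/2) :
    -x - x^2/(2*(1-x)) ≤ Real.log (1-x) := by
  set F : ℝ → ℝ := fun t => Real.log (1-t) + t + t^2/(2*(1-t)) with hF
  have key : ∀ y ∈ Set.Icc (0:ℝ) (1/2:ℝ), HasDerivAt F (y^2/(2*(1-y)^2)) y := by
    intro y hy
    have hy0 : (0:ℝ) ≤ y := hy.1
    have hy1 : y ≤ 1/2 := hy.2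
    have hne : (1:ℝ) - y ≠ 0 := by intro hc; nlinarith [hy.2]
    have hsub : HasDerivAt (fun t : ℝ => 1 - t) (-1) y := by
      exact (hasDerivAt_id' y).const_sub (1:ℝ)
    have h1 : HasDerivAt (fun t : ℝ => Real.log (1-t)) ((1-y)⁻¹ * (-1)) y :=
      (Real.hasDerivAt_log hne).comp y hsub
    have h2 := hasDerivAt_id y
    have hnum := hasDerivAt_pow 2 y
    have hden : HasDerivAt (fun t : ℝ => 2*(1-t)) (2*(-1)) y := hsub.const_mul 2
    have h3 := hnum.div hden (by simpa using hne)
    have := (h1.add h2).add h3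
    refine this.congr_deriv ?_
    field_simp
    ring
  have h0 : ∀ y ∈ Set.Icc (0:ℝ) (1/2:ℝ), 0 ≤ y^2/(2*(1-y)^2) := by
    intro y hy; positivity
  have := F_nonneg_of_deriv key h0 (Set.mem_Icc.2 ⟨hx0, hx1⟩)
  simp only [hF] at this
  norm_num at this
  linarith [this]

lemma log_lower_artanh {x : ℝ} (hx : 0 ≤ x) :
    2*x/(2+x) + 2*x^3/(3*(2+x)^3) ≤ Real.log (1+x) := by
  set F : ℝ → ℝ := fun t => Real.log (1+t) - (2*t/(2+t) + 2*t^3/(3*(2+t)^3)) with hF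
  have key : ∀ y ∈ Set.Icc (0:ℝ) x, HasDerivAt F (y^4/((1+y)*(2+y)^4)) y := by
    intro y hy
    have hy0 : (0:ℝ) ≤ y := hy.1
    have h2y : (2:ℝ)+y ≠ 0 := by positivity
    have h1 : HasDerivAt (fun t : ℝ => Real.log (1+t)) (1/(1+y)) y :=
      hasDerivAt_log1p (by linarith)
    have hA : HasDerivAt (fun t : ℝ => 2*t) 2 y := by
      simpa using (hasDerivAt_id y).const_mul (2:ℝ)
    have hB : HasDerivAt (fun t : ℝ => 2+t) 1 y := by
      simpa using (hasDerivAt_id y).const_add (2:ℝ)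
    have hC : HasDerivAt (fun t : ℝ => 2*t^3) (2*(3*y^2)) y := by
      simpa using (hasDerivAt_pow 3 y).const_mul (2:ℝ)
    have hD : HasDerivAt (fun t : ℝ => 3*(2+t)^3) (3*(3*(2+y)^2*1)) y := by
      simpa using (hB.pow 3).const_mul (3:ℝ)
    have hd1 := hA.div hB h2y
    have hd2 := hC.div hD (by positivity)
    have := h1.sub (hd1.add hd2)
    refine this.congr_deriv ?_
    field_simp
    ring
  have h0 : ∀ y ∈ Set.Icc (0:ℝ) x, 0 ≤ y^4/((1+y)*(2+y)^4) := by
    intro y hy; have := hy.1; positivity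
  have := F_nonneg_of_deriv key h0 (Set.mem_Icc.2 ⟨hx, le_refl x⟩)
  simp only [hF] at this
  norm_num at this
  linarith [this]

lemma log3_lo : (1.09848:ℝ) ≤ Real.log 3 := by
  have h := log_lower_artanh (show (0:ℝ) ≤ 1/2 by norm_num)
  norm_num at h
  have h3 : Real.log 3 = Real.log 2 + Real.log (3/2) := by
    rw [← Real.log_mul (by norm_num) (by norm_num)]; norm_num
  have := Real.log_two_gt_d9
  rw [h3]; linarith

lemma log3_hi : Real.log 3 ≤ (1.10044:ℝ) := by
  have h := log_upper_sum5 (show (0:ℝ) ≤ 1/2 by norm_num)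
  norm_num at h
  have h3 : Real.log 3 = Real.log 2 + Real.log (3/2) := by
    rw [← Real.log_mul (by norm_num) (by norm_num)]; norm_num
  have := Real.log_two_lt_d9
  rw [h3]; linarith

lemma log5_hi : Real.log 5 ≤ (1.60948:ℝ) := by
  have h := log_upper_sum5 (show (0:ℝ) ≤ 1/4 by norm_num)
  norm_num at h
  have h5 : Real.log 5 = Real.log 2 + Real.log 2 + Real.log (5/4) := by
    rw [← Real.log_mul (by norm_num) (by norm_num), ← Real.log_mul (by norm_num) (by norm_num)]
    norm_num
  have := Real.log_two_lt_d9
  rw [h5]; linarith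


private lemma regR1 {s : ℝ} (h1 : 1 ≤ s) (h2 : s ≤ 3/2) :
    0 ≤ (s^2+3*s+1)*Real.log (1+2*s)*(4*s+3) + 2*(1+s)*(1+2*s)
        - ((1+s)*(1+2*s)*Real.log 2 + s*(1+2*s))*(4*s+3) := by
  have ht0 : (0:ℝ) ≤ (2*s-2)/3 := by linarith
  have hser := log_lower_sum4 ht0
  have hL : Real.log (1+2*s) = Real.log 3 + Real.log (1+(2*s-2)/3) := by
    rw [show (1:ℝ)+2*s = 3*(1+(2*s-2)/3) by ring,
      Real.log_mul (by norm_num) (by nlinarith)]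
  rw [hL]
  have hlog3 := log3_lo
  have hlog2 := Real.log_two_lt_d9.le
  have c1 : (0:ℝ) ≤ (s^2+3*s+1)*(4*s+3) := by nlinarith
  have c2 : (0:ℝ) ≤ (1+s)*(1+2*s)*(4*s+3) := by nlinarith
  have ha : (0:ℝ) ≤ s - 1 := by linarith
  have hb : (0:ℝ) ≤ 3/2 - s := by linarith
  nlinarith [mul_le_mul_of_nonneg_left hser c1, mul_le_mul_of_nonneg_left hlog3 c1,
    mul_le_mul_of_nonneg_left hlog2 c2,
    mul_nonneg ha hb, mul_nonneg (mul_nonneg ha ha) hb,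
    mul_nonneg (mul_nonneg (mul_nonneg ha ha) ha) hb,
    mul_nonneg (mul_nonneg (mul_nonneg (mul_nonneg ha ha) ha) ha) hb,
    mul_nonneg (mul_nonneg (mul_nonneg (mul_nonneg (mul_nonneg ha ha) ha) ha) ha) hb,
    mul_nonneg (mul_nonneg (mul_nonneg (mul_nonneg (mul_nonneg (mul_nonneg ha ha) ha) ha) ha) ha) hb,
    pow_nonneg ha 2, pow_nonneg ha 3, pow_nonneg ha 4, pow_nonneg ha 5, pow_nonneg ha 6,
    pow_nonneg ha 7]


set_option maxHeartbeats 1000000 in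
private lemma regR2a {s : ℝ} (h1 : 3/2 ≤ s) (h2 : s ≤ 19/10) :
    0 ≤ (s^2+3*s+1)*Real.log (1+2*s)*(4*s+3) + 2*(1+s)*(1+2*s)
        - ((1+s)*(1+2*s)*Real.log 2 + s*(1+2*s))*(4*s+3) := by
  have ht0 : (0:ℝ) ≤ (19-10*s)/24 := by linarith
  have hser0 := log_lower_neg ht0 (by linarith)
  have hser : -((19-10*s)/24) - (3/5)*((19-10*s)/24)^2 ≤ Real.log (1-(19-10*s)/24) := by
    have hd : ((19-10*s)/24)^2/(2*(1-(19-10*s)/24)) ≤ (3/5)*((19-10*s)/24)^2 := by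
      rw [div_le_iff₀ (by linarith)]
      nlinarith [sq_nonneg ((19-10*s)/24)]
    linarith
  have hL : Real.log (1+2*s) = Real.log (24/5) + Real.log (1-(19-10*s)/24) := by
    rw [show (1:ℝ)+2*s = (24/5)*(1-(19-10*s)/24) by ring,
      Real.log_mul (by norm_num) (by intro hc; nlinarith)]
  have hanchor : (1.5684415:ℝ) ≤ Real.log (24/5) := by
    have h245 : Real.log (24/5) = 3*Real.log 2 + Real.log 3 - Real.log 5 := by
      rw [show (24:ℝ)/5 = 2*2*2*3/5 by norm_num,
        Real.log_div (by norm_num) (by norm_num),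
        Real.log_mul (by norm_num) (by norm_num),
        Real.log_mul (by norm_num) (by norm_num),
        Real.log_mul (by norm_num) (by norm_num)]
      ring
    have := Real.log_two_gt_d9
    have := log3_lo
    have := log5_hi
    rw [h245]; linarith
  rw [hL]
  have hlog2u := Real.log_two_lt_d9.le
  have c1 : (0:ℝ) ≤ (s^2+3*s+1)*(4*s+3) := by nlinarith
  have c2 : (0:ℝ) ≤ (1+s)*(1+2*s)*(4*s+3) := by nlinarith
  have ha : (0:ℝ) ≤ s - 3/2 := by linarith
  have hb : (0:ℝ) ≤ 19/10 - s := by linarith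
  nlinarith [mul_le_mul_of_nonneg_left hser c1, mul_le_mul_of_nonneg_left hanchor c1,
    mul_le_mul_of_nonneg_left hlog2u c2,
    mul_nonneg ha hb, mul_nonneg (mul_nonneg ha ha) hb,
    mul_nonneg (mul_nonneg ha ha) (mul_nonneg hb hb),
    mul_nonneg (mul_nonneg (mul_nonneg ha ha) ha) hb, sq_nonneg (s-3/2), sq_nonneg (19/10-s)]


set_option maxHeartbeats 1000000 in
private lemma regR2b {s : ℝ} (h1 : 19/10 ≤ s) (h2 : s ≤ 5/2) :
    0 ≤ (s^2+3*s+1)*Real.log (1+2*s)*(4*s+3) + 2*(1+s)*(1+2*s)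
        - ((1+s)*(1+2*s)*Real.log 2 + s*(1+2*s))*(4*s+3) := by
  have ht0 : (0:ℝ) ≤ (10*s-19)/24 := by linarith
  have hser := log_lower_sum4 ht0
  have hL : Real.log (1+2*s) = Real.log (24/5) + Real.log (1+(10*s-19)/24) := by
    rw [show (1:ℝ)+2*s = (24/5)*(1+(10*s-19)/24) by ring,
      Real.log_mul (by norm_num) (by intro hc; nlinarith)]
  have hanchor : (1.5684415:ℝ) ≤ Real.log (24/5) := by
    have h245 : Real.log (24/5) = 3*Real.log 2 + Real.log 3 - Real.log 5 := by
      rw [show (24:ℝ)/5 = 2*2*2*3/5 by norm_num,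
        Real.log_div (by norm_num) (by norm_num),
        Real.log_mul (by norm_num) (by norm_num),
        Real.log_mul (by norm_num) (by norm_num),
        Real.log_mul (by norm_num) (by norm_num)]
      ring
    have := Real.log_two_gt_d9
    have := log3_lo
    have := log5_hi
    rw [h245]; linarith
  rw [hL]
  have hlog2u := Real.log_two_lt_d9.le
  have c1 : (0:ℝ) ≤ (s^2+3*s+1)*(4*s+3) := by nlinarith
  have c2 : (0:ℝ) ≤ (1+s)*(1+2*s)*(4*s+3) := by nlinarith
  have ha : (0:ℝ) ≤ s - 19/10 := by linarith
  have hb : (0:ℝ) ≤ 5/2 - s := by linarith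
  nlinarith [mul_le_mul_of_nonneg_left hser c1, mul_le_mul_of_nonneg_left hanchor c1,
    mul_le_mul_of_nonneg_left hlog2u c2,
    mul_nonneg ha hb, mul_nonneg (mul_nonneg ha ha) hb,
    mul_nonneg (mul_nonneg ha ha) (mul_nonneg hb hb),
    mul_nonneg (mul_nonneg (mul_nonneg ha ha) ha) hb,
    pow_nonneg ha 2, pow_nonneg ha 3, pow_nonneg ha 4, pow_nonneg ha 5,
    pow_nonneg ha 6, pow_nonneg ha 7]

set_option maxHeartbeats 1000000 in
private lemma regR3 {s : ℝ} (h1 : 5/2 ≤ s) (h2 : s ≤ 17/2) :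
    0 ≤ (s^2+3*s+1)*Real.log (1+2*s)*(4*s+3) + 2*(1+s)*(1+2*s)
        - ((1+s)*(1+2*s)*Real.log 2 + s*(1+2*s))*(4*s+3) := by
  have ht0 : (0:ℝ) ≤ (2*s-5)/6 := by linarith
  have hser0 := log_lower_artanh ht0
  -- clear denominators in the artanh bound: multiply by (2s+7)^3
  have hpows : (0:ℝ) < (2*s+7)^3 := by positivity
  have e1 : (2*s+7)^3 * (2*((2*s-5)/6)/(2+(2*s-5)/6) + 2*((2*s-5)/6)^3/(3*(2+(2*s-5)/6)^3))
      = 2*(2*s-5)*(2*s+7)^2 + (2/3)*(2*s-5)^3 := by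
    have h7 : (2*s+7:ℝ) ≠ 0 := by intro hc; nlinarith
    rw [show (2:ℝ)+(2*s-5)/6 = (2*s+7)/6 by ring]
    field_simp
  have hser : 2*(2*s-5)*(2*s+7)^2 + (2/3)*(2*s-5)^3
      ≤ (2*s+7)^3 * Real.log (1+(2*s-5)/6) := by
    rw [← e1]
    exact mul_le_mul_of_nonneg_left hser0 hpows.le
  have hL : Real.log (1+2*s) = Real.log 6 + Real.log (1+(2*s-5)/6) := by
    rw [show (1:ℝ)+2*s = 6*(1+(2*s-5)/6) by ring,
      Real.log_mul (by norm_num) (by intro hc; nlinarith)]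
  have hanchor : (1.7916271:ℝ) ≤ Real.log 6 := by
    have h6 : Real.log 6 = Real.log 2 + Real.log 3 := by
      rw [show (6:ℝ) = 2*3 by norm_num, Real.log_mul (by norm_num) (by norm_num)]
    have := Real.log_two_gt_d9
    have := log3_lo
    rw [h6]; linarith
  rw [hL, ← mul_nonneg_iff_of_pos_left hpows]
  have hlog2u := Real.log_two_lt_d9.le
  have c1 : (0:ℝ) ≤ (s^2+3*s+1)*(4*s+3) := by nlinarith
  have c2 : (0:ℝ) ≤ (1+s)*(1+2*s)*(4*s+3)*(2*s+7)^3 := by positivity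
  have c3 : (0:ℝ) ≤ (s^2+3*s+1)*(4*s+3)*(2*s+7)^3 := by positivity
  have ha : (0:ℝ) ≤ s - 5/2 := by linarith
  have hb : (0:ℝ) ≤ 17/2 - s := by linarith
  nlinarith [mul_le_mul_of_nonneg_left hser c1, mul_le_mul_of_nonneg_left hanchor c3,
    mul_le_mul_of_nonneg_left hlog2u c2,
    mul_nonneg ha hb, mul_nonneg (mul_nonneg ha ha) hb,
    mul_nonneg (mul_nonneg ha ha) (mul_nonneg hb hb),
    pow_nonneg ha 2, pow_nonneg ha 3, pow_nonneg ha 4, pow_nonneg ha 5,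
    pow_nonneg ha 6]

set_option maxHeartbeats 1000000 in
private lemma regR4 {s : ℝ} (h1 : 17/2 ≤ s) :
    0 ≤ (s^2+3*s+1)*Real.log (1+2*s)*(4*s+3) + 2*(1+s)*(1+2*s)
        - ((1+s)*(1+2*s)*Real.log 2 + s*(1+2*s))*(4*s+3) := by
  have ht0 : (0:ℝ) ≤ (2*s-17)/18 := by linarith
  have hser0 := log_lower_artanh ht0
  have hpows : (0:ℝ) < 2*s+19 := by linarith
  have e1 : (2*s+19) * (2*((2*s-17)/18)/(2+(2*s-17)/18)) = 2*(2*s-17) := by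
    have h19 : (2*s+19:ℝ) ≠ 0 := by intro hc; nlinarith
    rw [show (2:ℝ)+(2*s-17)/18 = (2*s+19)/18 by ring]
    field_simp
  have hser : 2*(2*s-17) ≤ (2*s+19) * Real.log (1+(2*s-17)/18) := by
    rw [← e1]
    apply mul_le_mul_of_nonneg_left _ hpows.le
    have hc3 : 0 ≤ 2*((2*s-17)/18)^3/(3*(2+(2*s-17)/18)^3) := by positivity
    linarith
  have hL : Real.log (1+2*s) = Real.log 18 + Real.log (1+(2*s-17)/18) := by
    rw [show (1:ℝ)+2*s = 18*(1+(2*s-17)/18) by ring,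
      Real.log_mul (by norm_num) (by intro hc; nlinarith)]
  have hanchor : (2.8901071:ℝ) ≤ Real.log 18 := by
    have h18 : Real.log 18 = Real.log 2 + Real.log 3 + Real.log 3 := by
      rw [show (18:ℝ) = 2*3*3 by norm_num, Real.log_mul (by norm_num) (by norm_num),
        Real.log_mul (by norm_num) (by norm_num)]
    have := Real.log_two_gt_d9
    have := log3_lo
    rw [h18]; linarith
  rw [hL, ← mul_nonneg_iff_of_pos_left hpows]
  have hlog2u := Real.log_two_lt_d9.le
  have c1 : (0:ℝ) ≤ (s^2+3*s+1)*(4*s+3) := by nlinarith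
  have c2 : (0:ℝ) ≤ (1+s)*(1+2*s)*(4*s+3)*(2*s+19) := by positivity
  have c3 : (0:ℝ) ≤ (s^2+3*s+1)*(4*s+3)*(2*s+19) := by positivity
  have ha : (0:ℝ) ≤ s - 17/2 := by linarith
  nlinarith [mul_le_mul_of_nonneg_left hser c1, mul_le_mul_of_nonneg_left hanchor c3,
    mul_le_mul_of_nonneg_left hlog2u c2,
    pow_nonneg ha 2, pow_nonneg ha 3, pow_nonneg ha 4, pow_nonneg ha 5]


private lemma Treg {s : ℝ} (hs : 1 ≤ s) :
    0 ≤ (s^2+3*s+1)*Real.log (1+2*s)*(4*s+3) + 2*(1+s)*(1+2*s)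
        - ((1+s)*(1+2*s)*Real.log 2 + s*(1+2*s))*(4*s+3) := by
  rcases le_total s (3/2) with h|h
  · exact regR1 hs h
  rcases le_total s (19/10) with h2|h2
  · exact regR2a h h2
  rcases le_total s (5/2) with h3|h3
  · exact regR2b h2 h3
  rcases le_total s (17/2) with h4|h4
  · exact regR3 h3 h4
  · exact regR4 h4

private lemma claimC {s : ℝ} (hs : 1 ≤ s) :
    s^2*Real.log (1+2*s) ≤ ((1+s)*Real.log (1+s) - s)*(1+2*s) := by
  have hu : (0:ℝ) < 1+2*s := by linarith
  have hA1 : 2/(4*s+3) ≤ Real.log (1+1/(1+2*s)) := by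
    have h0 : (0:ℝ) ≤ 1/(1+2*s) := by positivity
    have hb := log_lower_artanh h0
    have e1 : 2*(1/(1+2*s))/(2+1/(1+2*s)) = 2/(4*s+3) := by
      have hn1 : (1+2*s:ℝ) ≠ 0 := ne_of_gt hu
      have hn2 : (4*s+3:ℝ) ≠ 0 := by intro hc; nlinarith
      rw [div_eq_div_iff (by positivity) (by positivity)]
      field_simp
      ring
    have hc3 : 0 ≤ 2*(1/(1+2*s))^3/(3*(2+1/(1+2*s))^3) := by positivity
    rw [← e1]; linarith
  have hid : Real.log (1+s) = Real.log (1+2*s) - Real.log 2 + Real.log (1+1/(1+2*s)) := by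
    have h1 : Real.log ((1+2*s)*(1+1/(1+2*s)))
        = Real.log (1+2*s) + Real.log (1+1/(1+2*s)) :=
      Real.log_mul (ne_of_gt hu) (by positivity)
    have h2 : (1+2*s)*(1+1/(1+2*s)) = 2*(1+s) := by field_simp; ring
    have h3 : Real.log (2*(1+s)) = Real.log 2 + Real.log (1+s) :=
      Real.log_mul (by norm_num) (by intro hc; nlinarith)
    rw [h2, h3] at h1
    linarith
  rw [← sub_nonneg]
  have expand : ((1+s)*Real.log (1+s) - s)*(1+2*s) - s^2*Real.log (1+2*s)
      = (s^2+3*s+1)*Real.log (1+2*s) + (1+s)*(1+2*s)*Real.log (1+1/(1+2*s))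
        - (1+s)*(1+2*s)*Real.log 2 - s*(1+2*s) := by
    rw [hid]; ring
  rw [expand]
  have h43 : (0:ℝ) < 4*s+3 := by linarith
  rw [← mul_nonneg_iff_of_pos_right h43]
  have hT := Treg hs
  have hCpos : (0:ℝ) ≤ (1+s)*(1+2*s) := by nlinarith
  have m := mul_le_mul_of_nonneg_right (mul_le_mul_of_nonneg_left hA1 hCpos) h43.le
  have idd : 2/(4*s+3)*(4*s+3) = 2 := div_mul_cancel₀ 2 (ne_of_gt h43)
  nlinarith [hT, m, idd]

theorem g_nonneg (k : ℕ) (hk : 3 ≤ k) (s : ℝ) (hs0 : 0 ≤ s)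
    (hs1 : s ≤ ((k : ℝ) - 2) / 2) :
    0 ≤ h s - (Real.log ((k : ℝ) - 1) / ((k : ℝ) - 1)) * s ^ 2 := by
  have hk3 : (3:ℝ) ≤ (k:ℝ) := by exact_mod_cast hk
  have hh : h s = (1+s)*Real.log (1+s) - s := rfl
  have hexp3 : Real.exp 1 ≤ 3 := by
    have := Real.exp_one_lt_d9; linarith
  rcases le_total s 1 with hs1' | hs1'
  · -- small s : use Bennett-type bound and ρ ≤ log 3 / 3
    have hρ : Real.log ((k:ℝ)-1)/((k:ℝ)-1) ≤ Real.log 3/3 := by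
      rcases eq_or_lt_of_le hk3 with heq|hlt
      · rw [← heq]
        norm_num
        have h89 : Real.log 8 ≤ Real.log 9 :=
          Real.log_le_log (by norm_num) (by norm_num)
        rw [show (8:ℝ) = 2^3 by norm_num, show (9:ℝ) = 3^2 by norm_num,
          Real.log_pow, Real.log_pow] at h89
        push_cast at h89
        linarith
      · have hk4 : (4:ℝ) ≤ (k:ℝ) := by
          have : 3 < k := by exact_mod_cast hlt
          have : 4 ≤ k := by omega
          exact_mod_cast this
        exact Real.log_div_self_antitoneOn (Set.mem_setOf.2 hexp3)
          (Set.mem_setOf.2 (le_trans hexp3 (by linarith))) (by linarith)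
    have hρ' : Real.log ((k:ℝ)-1)/((k:ℝ)-1)*s^2 ≤ (1.10044/3)*s^2 := by
      apply mul_le_mul_of_nonneg_right _ (sq_nonneg s)
      have := log3_hi
      linarith
    have hb := log_lower_artanh hs0
    have hpos : (0:ℝ) < 3*(2+s)^3 := by positivity
    have e1 : 3*(2+s)^3*(2*s/(2+s)+2*s^3/(3*(2+s)^3)) = 6*s*(2+s)^2+2*s^3 := by
      have : (2:ℝ)+s ≠ 0 := by positivity
      field_simp
      ring
    have hb3 : 6*s*(2+s)^2+2*s^3 ≤ 3*(2+s)^3*Real.log (1+s) := by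
      rw [← e1]
      exact mul_le_mul_of_nonneg_left hb hpos.le
    rw [hh]
    rw [← mul_nonneg_iff_of_pos_left hpos]
    nlinarith [mul_le_mul_of_nonneg_left hb3 (show (0:ℝ) ≤ 1+s by linarith),
      hρ', sq_nonneg s, mul_nonneg (mul_nonneg hs0 hs0) (sub_nonneg.2 hs1'),
      mul_nonneg hs0 (sub_nonneg.2 hs1')]
  · -- large s : use claimC and monotonicity of log x / x
    have hCC := claimC hs1'
    have hu : (0:ℝ) < 1+2*s := by linarith
    have hkk : 1+2*s ≤ (k:ℝ)-1 := by linarith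
    have hexpu : Real.exp 1 ≤ 1+2*s := le_trans hexp3 (by linarith)
    have hmono : Real.log ((k:ℝ)-1)/((k:ℝ)-1) ≤ Real.log (1+2*s)/(1+2*s) :=
      Real.log_div_self_antitoneOn (Set.mem_setOf.2 hexpu)
        (Set.mem_setOf.2 (le_trans hexpu hkk)) hkk
    have h1 : Real.log ((k:ℝ)-1)/((k:ℝ)-1)*(1+2*s) ≤ Real.log (1+2*s) := by
      have := mul_le_mul_of_nonneg_right hmono hu.le
      rwa [div_mul_cancel₀ _ (ne_of_gt hu)] at this
    have h2 : s^2*(Real.log ((k:ℝ)-1)/((k:ℝ)-1)*(1+2*s)) ≤ s^2*Real.log (1+2*s) :=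
      mul_le_mul_of_nonneg_left h1 (sq_nonneg s)
    have h3 := le_trans h2 hCC
    have h4 : Real.log ((k:ℝ)-1)/((k:ℝ)-1)*s^2 ≤ (1+s)*Real.log (1+s) - s := by
      have := le_of_mul_le_mul_right (by nlinarith [h3] :
        (Real.log ((k:ℝ)-1)/((k:ℝ)-1)*s^2)*(1+2*s)
          ≤ ((1+s)*Real.log (1+s) - s)*(1+2*s)) hu
      linarith
    rw [hh]
    linarith
end

section
/- For integers k = 3 and k = 4, the function M_k(b) = (1+b)log(1+b) + (k-1-b)log(1 - b/(k-1)) - (k/(k-1))·ρ_k·b² with ρ_k = log(k-1)/(k-1) is convex on [0, k-1) and attains its minimum value zero at b = 0. -/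
open Real Set

noncomputable def rho (k : ℕ) : ℝ := Real.log ((k : ℝ) - 1) / ((k : ℝ) - 1)

noncomputable def M (k : ℕ) (b : ℝ) : ℝ :=
  (1 + b) * Real.log (1 + b) + ((k : ℝ) - 1 - b) * Real.log (1 - b / ((k : ℝ) - 1))
    - (k : ℝ) * rho k * b ^ 2 / ((k : ℝ) - 1)


noncomputable def ff (c b : ℝ) : ℝ :=
  (1 + b) * Real.log (1 + b) + (c - b) * Real.log (1 - b / c)
    - (c + 1) * (Real.log c / c) * b ^ 2 / c

noncomputable def f1 (c b : ℝ) : ℝ :=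
  Real.log (1 + b) - Real.log (1 - b / c) - 2 * (c + 1) * Real.log c * b / c ^ 2

noncomputable def f2 (c b : ℝ) : ℝ :=
  1 / (1 + b) + 1 / (c - b) - 2 * (c + 1) * Real.log c / c ^ 2

lemma hasDerivAt_ff {c b : ℝ} (hc : 0 < c) (hb : b ∈ Ioo (-1 : ℝ) c) :
    HasDerivAt (ff c) (f1 c b) b := by
  obtain ⟨hb1, hb2⟩ := hb
  have h1 : (0:ℝ) < 1 + b := by linarith
  have h2 : (0:ℝ) < c - b := by linarith
  have h3 : (0:ℝ) < 1 - b / c := by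
    rw [sub_pos, div_lt_one hc]; exact hb2
  have d1 : HasDerivAt (fun b : ℝ => 1 + b) 1 b := by
    simpa using (hasDerivAt_id b).const_add 1
  have d2 : HasDerivAt (fun b : ℝ => Real.log (1 + b)) (1 / (1 + b)) b :=
    d1.log h1.ne'
  have d3 : HasDerivAt (fun b : ℝ => c - b) (-1) b := by
    simpa using (hasDerivAt_id b).const_sub c
  have d4 : HasDerivAt (fun b : ℝ => 1 - b / c) (-(1/c)) b := by
    simpa using ((hasDerivAt_id b).div_const c).const_sub 1
  have d5 : HasDerivAt (fun b : ℝ => Real.log (1 - b / c)) ((-(1/c)) / (1 - b / c)) b :=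
    d4.log h3.ne'
  have dA : HasDerivAt (fun b : ℝ => (1 + b) * Real.log (1 + b))
      (1 * Real.log (1 + b) + (1 + b) * (1 / (1 + b))) b := d1.mul d2
  have dB : HasDerivAt (fun b : ℝ => (c - b) * Real.log (1 - b / c))
      ((-1) * Real.log (1 - b / c) + (c - b) * ((-(1/c)) / (1 - b / c))) b := d3.mul d5
  have dC : HasDerivAt (fun b : ℝ => (c + 1) * (Real.log c / c) * b ^ 2 / c)
      ((c + 1) * (Real.log c / c) * (2 * b) / c) b := by
    have := ((hasDerivAt_pow 2 b).const_mul ((c + 1) * (Real.log c / c))).div_const c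
    simpa using this
  have := (dA.add dB).sub dC
  convert this using 1
  · rfl
  · rfl
  · rfl
  have hcb : 1 - b / c = (c - b) / c := by field_simp
  rw [f1, hcb]
  field_simp
  ring

lemma hasDerivAt_f1 {c b : ℝ} (hc : 0 < c) (hb : b ∈ Ioo (-1 : ℝ) c) :
    HasDerivAt (f1 c) (f2 c b) b := by
  obtain ⟨hb1, hb2⟩ := hb
  have h1 : (0:ℝ) < 1 + b := by linarith
  have h2 : (0:ℝ) < c - b := by linarith
  have h3 : (0:ℝ) < 1 - b / c := by
    rw [sub_pos, div_lt_one hc]; exact hb2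
  have d2 : HasDerivAt (fun b : ℝ => Real.log (1 + b)) (1 / (1 + b)) b := by
    have d1 : HasDerivAt (fun b : ℝ => 1 + b) 1 b := by
      simpa using (hasDerivAt_id b).const_add 1
    exact d1.log h1.ne'
  have d4 : HasDerivAt (fun b : ℝ => 1 - b / c) (-(1/c)) b := by
    simpa using ((hasDerivAt_id b).div_const c).const_sub 1
  have d5 : HasDerivAt (fun b : ℝ => Real.log (1 - b / c)) ((-(1/c)) / (1 - b / c)) b :=
    d4.log h3.ne'
  have d6 : HasDerivAt (fun b : ℝ => 2 * (c + 1) * Real.log c * b / c ^ 2)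
      (2 * (c + 1) * Real.log c / c ^ 2) b := by
    simpa using ((hasDerivAt_id b).const_mul (2 * (c + 1) * Real.log c)).div_const (c ^ 2)
  have := (d2.sub d5).sub d6
  convert this using 1
  · rfl
  · rfl
  · rfl
  have hcb : 1 - b / c = (c - b) / c := by field_simp
  rw [f2, hcb]
  field_simp
  ring

lemma key_s12 (c : ℝ) (hc : 1 < c) (hlog : (c + 1) ^ 2 * Real.log c ≤ 2 * c ^ 2) :
    ConvexOn ℝ (Set.Ico 0 c) (ff c) ∧ ∀ b ∈ Set.Ico (0 : ℝ) c, 0 ≤ ff c b := by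
  have hc0 : (0:ℝ) < c := by linarith
  have hsub : Ico (0:ℝ) c ⊆ Ioo (-1 : ℝ) c := fun x hx => ⟨by linarith [hx.1], hx.2⟩
  have hint : interior (Ico (0:ℝ) c) = Ioo (0:ℝ) c := interior_Ico
  have hsub2 : Ioo (0:ℝ) c ⊆ Ioo (-1 : ℝ) c := fun x hx => ⟨by linarith [hx.1], hx.2⟩
  have hderiv : ∀ x ∈ Ioo (-1 : ℝ) c, deriv (ff c) x = f1 c x := fun x hx =>
    (hasDerivAt_ff hc0 hx).deriv
  have hcont : ContinuousOn (ff c) (Ico 0 c) := fun x hx =>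
    ((hasDerivAt_ff hc0 (hsub hx)).differentiableAt.continuousAt).continuousWithinAt
  have hdiff : DifferentiableOn ℝ (ff c) (interior (Ico (0:ℝ) c)) := by
    rw [hint]
    exact fun x hx => (hasDerivAt_ff hc0 (hsub2 hx)).differentiableAt.differentiableWithinAt
  have hlogc : 0 < Real.log c := Real.log_pos hc
  have hf2 : ∀ x ∈ Ioo (0:ℝ) c, 0 ≤ f2 c x := by
    intro x hx
    have h1 : (0:ℝ) < 1 + x := by linarith [hx.1]
    have h2 : (0:ℝ) < c - x := by linarith [hx.2]
    have e : 1 / (1 + x) + 1 / (c - x) = (c + 1) / ((1 + x) * (c - x)) := by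
      field_simp
      ring
    rw [f2, e, sub_nonneg, div_le_div_iff₀ (by positivity) (by positivity)]
    have hab : (1 + x) * (c - x) ≤ ((c + 1) / 2) ^ 2 := by nlinarith [sq_nonneg (c - 1 - 2 * x)]
    nlinarith [mul_nonneg hlogc.le (sq_nonneg (c - 1 - 2 * x)),
      mul_nonneg (mul_nonneg hlogc.le h1.le) h2.le]
  -- deriv of f1 on interior
  have hderiv1 : ∀ x ∈ Ioo (-1 : ℝ) c, deriv (f1 c) x = f2 c x := fun x hx =>
    (hasDerivAt_f1 hc0 hx).deriv
  have hcont1 : ContinuousOn (f1 c) (Ico 0 c) := fun x hx =>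
    ((hasDerivAt_f1 hc0 (hsub hx)).differentiableAt.continuousAt).continuousWithinAt
  have hdiff1 : DifferentiableOn ℝ (f1 c) (interior (Ico (0:ℝ) c)) := by
    rw [hint]
    exact fun x hx => (hasDerivAt_f1 hc0 (hsub2 hx)).differentiableAt.differentiableWithinAt
  -- convexity
  have hconv : ConvexOn ℝ (Ico (0:ℝ) c) (ff c) := by
    apply convexOn_of_deriv2_nonneg (convex_Ico 0 c) hcont hdiff
    · rw [hint]
      intro x hx
      exact ((hasDerivAt_f1 hc0 (hsub2 hx)).congr_of_eventuallyEq
        ((isOpen_Ioo.eventually_mem (hsub2 hx)).mono fun y hy => hderiv y hy)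
        ).differentiableAt.differentiableWithinAt
    · rw [hint]
      intro x hx
      have e1 : deriv (ff c) =ᶠ[nhds x] f1 c :=
        (isOpen_Ioo.eventually_mem (hsub2 hx)).mono fun y hy => hderiv y hy
      have : deriv^[2] (ff c) x = deriv (f1 c) x := by
        simp only [Function.iterate_succ, Function.iterate_zero, Function.comp_apply, id]
        exact e1.deriv_eq
      rw [this, hderiv1 x (hsub2 hx)]
      exact hf2 x hx
  refine ⟨hconv, ?_⟩
  -- f1 nonneg on Ico 0 c
  have hmono1 : MonotoneOn (f1 c) (Ico 0 c) := by
    apply monotoneOn_of_deriv_nonneg (convex_Ico 0 c) hcont1 hdiff1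
    rw [hint]
    intro x hx
    rw [hderiv1 x (hsub2 hx)]
    exact hf2 x hx
  have hf10 : f1 c 0 = 0 := by simp [f1]
  have hf1nonneg : ∀ x ∈ Ioo (0:ℝ) c, 0 ≤ deriv (ff c) x := by
    intro x hx
    rw [hderiv x (hsub2 hx)]
    have := hmono1 (by constructor <;> [rfl; exact hc0] : (0:ℝ) ∈ Ico (0:ℝ) c)
      ⟨hx.1.le, hx.2⟩ hx.1.le
    rw [hf10] at this; exact this
  have hmono : MonotoneOn (ff c) (Ico 0 c) := by
    apply monotoneOn_of_deriv_nonneg (convex_Ico 0 c) hcont hdiff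
    rw [hint]; exact hf1nonneg
  intro b hb
  have h0 : ff c 0 = 0 := by simp [ff]
  have := hmono (⟨le_refl 0, hc0⟩ : (0:ℝ) ∈ Ico (0:ℝ) c) hb hb.1
  rw [h0] at this; exact this

lemma log_three_lt : Real.log 3 < 9 / 8 := by
  rw [show (9:ℝ)/8 = 9 * (1/8) by ring]
  rw [Real.log_lt_iff_lt_exp (by norm_num)]
  have h1 : (3:ℝ) ^ (8:ℕ) < Real.exp (9 * (1/8)) ^ (8:ℕ) := by
    rw [← Real.exp_nat_mul]
    norm_num
    calc (6561:ℝ) < 2.7182818283 ^ (9:ℕ) := by norm_num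
      _ < Real.exp 1 ^ (9:ℕ) := by
          exact pow_lt_pow_left₀ Real.exp_one_gt_d9 (by norm_num) (by norm_num)
      _ = Real.exp 9 := by rw [← Real.exp_nat_mul]; norm_num
      
  exact lt_of_pow_lt_pow_left₀ 8 (Real.exp_pos _).le h1

theorem M_convex_min (k : ℕ) (hk : k = 3 ∨ k = 4) :
    ConvexOn ℝ (Set.Ico (0 : ℝ) ((k : ℝ) - 1)) (M k) ∧ M k 0 = 0 ∧
      ∀ b ∈ Set.Ico (0 : ℝ) ((k : ℝ) - 1), 0 ≤ M k b := by
  have hM0 : M k 0 = 0 := by simp [M]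
  rcases hk with hk | hk <;> subst hk
  · have heq : M 3 = ff 2 := by
      funext b
      simp only [M, ff, rho]
      norm_num
      try ring
    have h2 : ((3:ℕ) : ℝ) - 1 = 2 := by norm_num
    have hlog : ((2:ℝ) + 1) ^ 2 * Real.log 2 ≤ 2 * 2 ^ 2 := by
      nlinarith [Real.log_two_lt_d9]
    obtain ⟨hc, hn⟩ := key_s12 2 (by norm_num) hlog
    rw [h2, heq]
    exact ⟨hc, by simp [ff], hn⟩
  · have heq : M 4 = ff 3 := by
      funext b
      simp only [M, ff, rho]
      norm_num
      try ring
    have h2 : ((4:ℕ) : ℝ) - 1 = 3 := by norm_num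
    have hlog : ((3:ℝ) + 1) ^ 2 * Real.log 3 ≤ 2 * 3 ^ 2 := by
      nlinarith [log_three_lt]
    obtain ⟨hc, hn⟩ := key_s12 3 (by norm_num) hlog
    rw [h2, heq]
    exact ⟨hc, by simp [ff], hn⟩
end
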